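/- arXiv:0911.2551 — 5 statements merged into one kernel-verified Lean document; each statement's English description precedes it below -/
import Mathlib

section
/- Let N ≥ 1 be an integer, let π_1,…,π_N be strictly positive weights, let Y_1,…,Y_N be mutually independent real random variables and Z_1,…,Z_N be mutually independent real random variables such that Z_i is stochastically larger than Y_i for every i. Then for every threshold η ∈ ℝ, P( max_{1≤n≤N} log( Σ_{k=1}^n π_k exp( Σ_{i=k}^n Y_i ) ) ≥ η ) ≤ P( max_{1≤n≤N} log( Σ_{k=1}^n π_k exp( Σ_{i=k}^n Z_i ) ) ≥ η ). -/
open MeasureTheory ProbabilityTheory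

/-- The Shiryaev statistic `max_{1 ≤ n ≤ N} log (∑_{k=1}^n π_k exp (∑_{i=k}^n x_i))`
of `x_1,…,x_N` with weights `π`. -/
noncomputable def shiryaevStat (N : ℕ) (hN : 0 < N) (π : Fin N → ℝ) (x : Fin N → ℝ) : ℝ :=
  Finset.univ.sup' ⟨⟨0, hN⟩, Finset.mem_univ _⟩ fun n : Fin N =>
    Real.log (∑ k ∈ Finset.Iic n, π k * Real.exp (∑ i ∈ Finset.Icc k n, x i))

section Aux
open MeasureTheory ProbabilityTheory Set
open scoped ENNReal

/-- An upper set in `ℝ` is `∅`, `univ`, `Ici a`, or `Ioi a`. -/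
lemma upperSet_real_cases {S : Set ℝ} (hS : IsUpperSet S) :
    S = ∅ ∨ S = univ ∨ ∃ a, S = Ici a ∨ S = Ioi a := by
  rcases S.eq_empty_or_nonempty with h | h
  · exact Or.inl h
  by_cases hb : BddBelow S
  · right; right
    refine ⟨sInf S, ?_⟩
    have h1 : Ioi (sInf S) ⊆ S := fun x hx => by
      obtain ⟨s, hs, hsx⟩ := (csInf_lt_iff hb h).1 hx
      exact hS hsx.le hs
    have h2 : S ⊆ Ici (sInf S) := fun x hx => csInf_le hb hx
    by_cases h0 : sInf S ∈ S
    · left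
      refine subset_antisymm h2 fun x hx => ?_
      exact hS hx h0
    · right
      refine subset_antisymm (fun x hx => ?_) h1
      rcases lt_or_eq_of_le (mem_Ici.1 (h2 hx)) with h' | h'
      · exact h'
      · exact absurd (h' ▸ hx) h0
  · right; left
    refine eq_univ_of_forall fun x => ?_
    obtain ⟨s, hs, hsx⟩ := not_bddBelow_iff.1 hb x
    exact hS hsx.le hs

lemma meas_Ioi_mono {μ ν : Measure ℝ} (h : ∀ t, μ (Ici t) ≤ ν (Ici t)) (t : ℝ) :
    μ (Ioi t) ≤ ν (Ioi t) := by
  have hU : Ioi t = ⋃ n : ℕ, Ici (t + (n + 1 : ℝ)⁻¹) := by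
    ext x
    simp only [mem_Ioi, mem_iUnion, mem_Ici]
    constructor
    · intro hx
      obtain ⟨n, hn⟩ := exists_nat_gt (x - t)⁻¹
      refine ⟨n, ?_⟩
      have hxt : 0 < x - t := sub_pos.2 hx
      have h1 : (x - t)⁻¹ < (n : ℝ) + 1 := hn.trans (lt_add_one _)
      have h2 : ((n : ℝ) + 1)⁻¹ < x - t := by
        rw [inv_lt_comm₀ (by positivity) hxt]
        exact h1
      linarith
    · rintro ⟨n, hn⟩
      have : (0 : ℝ) < ((n : ℝ) + 1)⁻¹ := by positivity
      linarith
  rw [hU]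
  have hdir : Directed (· ⊆ ·) fun n : ℕ => Ici (t + ((n : ℝ) + 1)⁻¹) := by
    intro m n
    have key : ∀ p q : ℕ, p ≤ q → t + ((q : ℝ) + 1)⁻¹ ≤ t + ((p : ℝ) + 1)⁻¹ := by
      intro p q hpq
      have : ((q : ℝ) + 1)⁻¹ ≤ ((p : ℝ) + 1)⁻¹ := by
        apply inv_anti₀ (by positivity)
        exact_mod_cast Nat.succ_le_succ hpq
      linarith
    exact ⟨max m n, Ici_subset_Ici.2 (key _ _ (le_max_left m n)),
      Ici_subset_Ici.2 (key _ _ (le_max_right m n))⟩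
  rw [hdir.measure_iUnion]
  refine iSup_le fun n => (h _).trans (measure_mono ?_)
  intro x hx
  have : (0 : ℝ) < ((n : ℝ) + 1)⁻¹ := by positivity
  simp only [mem_Ici] at hx
  simp only [mem_iUnion, mem_Ici]
  exact ⟨n, hx⟩

lemma upperSet_meas_mono {μ ν : Measure ℝ} [IsProbabilityMeasure μ] [IsProbabilityMeasure ν]
    (h : ∀ t, μ (Ici t) ≤ ν (Ici t)) {S : Set ℝ} (hS : IsUpperSet S) : μ S ≤ ν S := by
  rcases upperSet_real_cases hS with rfl | rfl | ⟨a, rfl | rfl⟩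
  · simp
  · simp
  · exact h a
  · exact meas_Ioi_mono h a

/-- Monotone bounded `ℝ≥0∞`-valued integrands integrate monotonically against
stochastically ordered probability measures. -/
lemma lintegral_mono_of_stochDom {μ ν : Measure ℝ} [IsProbabilityMeasure μ]
    [IsProbabilityMeasure ν] (h : ∀ t, μ (Ici t) ≤ ν (Ici t))
    {g : ℝ → ℝ≥0∞} (hg : Monotone g) (hg1 : ∀ a, g a ≤ 1) :
    ∫⁻ a, g a ∂μ ≤ ∫⁻ a, g a ∂ν := by
  set f : ℝ → ℝ := fun a => (g a).toReal with hf
  have hgne : ∀ a, g a ≠ ∞ := fun a => (lt_of_le_of_lt (hg1 a) (by norm_num)).ne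
  have hfm : Monotone f := fun a b hab => ENNReal.toReal_mono (hgne b) (hg hab)
  have hof : ∀ a, ENNReal.ofReal (f a) = g a := fun a => ENNReal.ofReal_toReal (hgne a)
  have key : ∀ (ρ : Measure ℝ), ∫⁻ a, g a ∂ρ = ∫⁻ t in Ioi 0, ρ {a | t ≤ f a} := by
    intro ρ
    rw [← lintegral_eq_lintegral_meas_le ρ (Filter.Eventually.of_forall fun a =>
      ENNReal.toReal_nonneg) hfm.measurable.aemeasurable]
    exact lintegral_congr fun a => (hof a).symm
  rw [key μ, key ν]
  refine lintegral_mono fun t => upperSet_meas_mono h fun a b hab ha => le_trans ha (hfm hab)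

lemma pi_meas_mono : ∀ (n : ℕ) (μ ν : Fin n → Measure ℝ),
    (∀ i, IsProbabilityMeasure (μ i)) → (∀ i, IsProbabilityMeasure (ν i)) →
    (∀ i t, μ i (Ici t) ≤ ν i (Ici t)) →
    ∀ S : Set (Fin n → ℝ), MeasurableSet S → IsUpperSet S →
      Measure.pi μ S ≤ Measure.pi ν S := by
  intro n
  induction n with
  | zero =>
    intro μ ν hμ hν h S hSm hSu
    haveI := hμ; haveI := hν
    rcases S.eq_empty_or_nonempty with rfl | ⟨x, hx⟩
    · simp
    · have : S = univ := eq_univ_of_forall fun y => (Subsingleton.elim x y) ▸ hx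
      subst this
      simp [measure_univ]
  | succ n IH =>
    intro μ ν hμ hν h S hSm hSu
    haveI := hμ; haveI := hν
    set e := MeasurableEquiv.piFinSuccAbove (fun _ : Fin (n + 1) => ℝ) 0 with he
    have hmono : ∀ (a a' : ℝ) (b b' : Fin n → ℝ), a ≤ a' → b ≤ b' →
        (Fin.insertNth 0 a b : Fin (n + 1) → ℝ) ≤ Fin.insertNth 0 a' b' := by
      intro a a' b b' haa hbb j
      refine Fin.succAboveCases (0 : Fin (n + 1)) ?_ (fun k => ?_) j
      · simpa using haa
      · simpa using hbb k
    set T : Set (ℝ × (Fin n → ℝ)) := e.symm ⁻¹' S with hT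
    have hTm : MeasurableSet T := e.symm.measurable hSm
    have hsymm : ∀ p : ℝ × (Fin n → ℝ), e.symm p = Fin.insertNth 0 p.1 p.2 := by
      intro p
      simp [he, MeasurableEquiv.piFinSuccAbove_symm_apply, Fin.consEquiv, Fin.insertNthEquiv]
    have hpre : ∀ (ρ : Fin (n + 1) → Measure ℝ) (_ : ∀ i, IsProbabilityMeasure (ρ i)),
        Measure.pi ρ S = ((ρ 0).prod (Measure.pi fun j => ρ (Fin.succAbove 0 j))) T := by
      intro ρ hρ
      haveI := hρ
      have hmp := measurePreserving_piFinSuccAbove ρ 0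
      have hET : ⇑e ⁻¹' T = S := by
        ext x; simp [hT]
      rw [← hET]
      exact hmp.measure_preimage hTm.nullMeasurableSet
    rw [hpre μ hμ, hpre ν hν]
    rw [Measure.prod_apply hTm, Measure.prod_apply hTm]
    have hsec : ∀ a, MeasurableSet (Prod.mk a ⁻¹' T) := fun a => measurable_prodMk_left hTm
    have hsecU : ∀ a, IsUpperSet (Prod.mk a ⁻¹' T) := by
      intro a b b' hbb hb
      simp only [mem_preimage, hT, hsymm] at hb ⊢
      exact hSu (hmono a a b b' le_rfl hbb) hb
    calc ∫⁻ a, (Measure.pi fun j => μ (Fin.succAbove 0 j)) (Prod.mk a ⁻¹' T) ∂μ 0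
        ≤ ∫⁻ a, (Measure.pi fun j => ν (Fin.succAbove 0 j)) (Prod.mk a ⁻¹' T) ∂μ 0 := by
          refine lintegral_mono fun a => IH _ _ (fun j => hμ _) (fun j => hν _)
            (fun j t => h _ t) _ (hsec a) (hsecU a)
      _ ≤ ∫⁻ a, (Measure.pi fun j => ν (Fin.succAbove 0 j)) (Prod.mk a ⁻¹' T) ∂ν 0 := by
          haveI : ∀ j, IsProbabilityMeasure ((fun j => ν (Fin.succAbove 0 j)) j) :=
            fun j => hν _
          refine lintegral_mono_of_stochDom (h 0) ?_ ?_
          · intro a a' haa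
            refine measure_mono fun b hb => ?_
            simp only [mem_preimage, hT, hsymm] at hb ⊢
            exact hSu (hmono a a' b b haa le_rfl) hb
          · intro a
            exact prob_le_one

lemma shiryaevStat_monotone (N : ℕ) (hN : 0 < N) (π : Fin N → ℝ) (hπ : ∀ k, 0 < π k) :
    Monotone (shiryaevStat N hN π) := by
  intro x y hxy
  unfold shiryaevStat
  apply Finset.sup'_le
  intro n _
  refine Finset.le_sup'_of_le _ (Finset.mem_univ n) ?_
  apply Real.log_le_log
  · apply Finset.sum_pos
    · intro k _
      exact mul_pos (hπ k) (Real.exp_pos _)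
    · exact ⟨n, Finset.mem_Iic.2 le_rfl⟩
  · apply Finset.sum_le_sum
    intro k _
    refine mul_le_mul_of_nonneg_left ?_ (hπ k).le
    exact Real.exp_le_exp.2 (Finset.sum_le_sum fun i _ => hxy i)

lemma shiryaevStat_measurable (N : ℕ) (hN : 0 < N) (π : Fin N → ℝ) :
    Measurable (shiryaevStat N hN π) := by
  unfold shiryaevStat
  have : (fun x : Fin N → ℝ => Finset.univ.sup' ⟨⟨0, hN⟩, Finset.mem_univ _⟩ fun n : Fin N =>
      Real.log (∑ k ∈ Finset.Iic n, π k * Real.exp (∑ i ∈ Finset.Icc k n, x i)))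
      = Finset.univ.sup' ⟨⟨0, hN⟩, Finset.mem_univ _⟩ (fun n : Fin N => fun x : Fin N → ℝ =>
      Real.log (∑ k ∈ Finset.Iic n, π k * Real.exp (∑ i ∈ Finset.Icc k n, x i))) := by
    ext x
    exact (Finset.sup'_apply (C := fun _ => ℝ) (s := (Finset.univ : Finset (Fin N))) _ (fun n : Fin N => fun x : Fin N → ℝ =>
      Real.log (∑ k ∈ Finset.Iic n, π k * Real.exp (∑ i ∈ Finset.Icc k n, x i))) x).symm
  rw [this]
  apply Finset.measurable_sup' _
  intro n _
  apply Measurable.log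
  apply Finset.measurable_sum
  intro k _
  exact (measurable_const.mul ((Finset.measurable_sum _
    fun i _ => measurable_pi_apply i).exp))

lemma law_eq_pi {Ω : Type*} [MeasurableSpace Ω] (P : Measure Ω) [IsProbabilityMeasure P]
    (N : ℕ) (X : Fin N → Ω → ℝ) (hmeas : ∀ i, Measurable (X i))
    (hindep : iIndepFun X P) :
    P.map (fun ω i => X i ω) = Measure.pi (fun i => P.map (X i)) := by
  haveI : ∀ i, IsProbabilityMeasure (P.map (X i)) :=
    fun i => Measure.isProbabilityMeasure_map (hmeas i).aemeasurable
  symm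
  apply Measure.pi_eq
  intro s hs
  have hvec : Measurable (fun ω i => X i ω) :=
    measurable_pi_lambda _ fun i => hmeas i
  rw [Measure.map_apply hvec (MeasurableSet.univ_pi hs)]
  have hpre : (fun ω i => X i ω) ⁻¹' (univ.pi s) = ⋂ i ∈ Finset.univ, X i ⁻¹' s i := by
    ext ω; simp [Set.mem_pi]
  rw [hpre, hindep.measure_inter_preimage_eq_mul Finset.univ (fun i _ => hs i)]
  refine Finset.prod_congr rfl fun i _ => ?_
  rw [Measure.map_apply (hmeas i) (hs i)]

end Aux

/-- If `π_1,…,π_N` are strictly positive weights, `Y_1,…,Y_N` are mutually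
independent, `Z_1,…,Z_N` are mutually independent, and `Z_i` is stochastically larger than
`Y_i` for each `i`, then for every threshold `η`,
`P(max_{1≤n≤N} log (∑_{k=1}^n π_k exp (∑_{i=k}^n Y_i)) ≥ η)
  ≤ P(max_{1≤n≤N} log (∑_{k=1}^n π_k exp (∑_{i=k}^n Z_i)) ≥ η)`. -/
theorem stmt_7 {Ω₁ Ω₂ : Type*} [MeasurableSpace Ω₁] [MeasurableSpace Ω₂]
    (P₁ : Measure Ω₁) (P₂ : Measure Ω₂)
    [IsProbabilityMeasure P₁] [IsProbabilityMeasure P₂]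
    (N : ℕ) (hN : 1 ≤ N) (π : Fin N → ℝ) (hπ : ∀ k, 0 < π k)
    (Y : Fin N → Ω₁ → ℝ) (Z : Fin N → Ω₂ → ℝ)
    (hYmeas : ∀ i, Measurable (Y i)) (hZmeas : ∀ i, Measurable (Z i))
    (hYindep : iIndepFun Y P₁)
    (hZindep : iIndepFun Z P₂)
    (hdom : ∀ (i : Fin N) (t : ℝ), P₁ {ω | t ≤ Y i ω} ≤ P₂ {ω | t ≤ Z i ω}) :
    ∀ η : ℝ, P₁ {ω | η ≤ shiryaevStat N hN π fun i => Y i ω}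
      ≤ P₂ {ω | η ≤ shiryaevStat N hN π fun i => Z i ω} := by
  intro η
  set A : Set (Fin N → ℝ) := {x | η ≤ shiryaevStat N hN π x} with hA
  have hAm : MeasurableSet A :=
    measurableSet_le measurable_const (shiryaevStat_measurable N hN π)
  have hAu : IsUpperSet A := fun x y hxy hx =>
    le_trans hx (shiryaevStat_monotone N hN π hπ hxy)
  have hYv : Measurable (fun ω i => Y i ω) := measurable_pi_lambda _ fun i => hYmeas i
  have hZv : Measurable (fun ω i => Z i ω) := measurable_pi_lambda _ fun i => hZmeas i
  have h1 : P₁ {ω | η ≤ shiryaevStat N hN π fun i => Y i ω}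
      = Measure.pi (fun i => P₁.map (Y i)) A := by
    rw [← law_eq_pi P₁ N Y hYmeas hYindep, Measure.map_apply hYv hAm]
    rfl
  have h2 : P₂ {ω | η ≤ shiryaevStat N hN π fun i => Z i ω}
      = Measure.pi (fun i => P₂.map (Z i)) A := by
    rw [← law_eq_pi P₂ N Z hZmeas hZindep, Measure.map_apply hZv hAm]
    rfl
  rw [h1, h2]
  refine pi_meas_mono N _ _
    (fun i => Measure.isProbabilityMeasure_map (hYmeas i).aemeasurable)
    (fun i => Measure.isProbabilityMeasure_map (hZmeas i).aemeasurable)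
    (fun i t => ?_) A hAm hAu
  rw [Measure.map_apply (hYmeas i) measurableSet_Ici,
    Measure.map_apply (hZmeas i) measurableSet_Ici]
  exact hdom i t
end

section
/- Let (𝒳,𝓕) be a measurable space, let L: 𝒳 → ℝ be measurable, let η ∈ ℝ, and let ν0 and ν̄0 be probability measures on 𝒳 such that the pushforward of ν̄0 under L is stochastically larger than the pushforward of ν0 under L. Let τ denote the CUSUM stopping time with statistic L and threshold η, i.e. τ = inf{n ≥ 1 : max_{1≤k≤n} Σ_{i=k}^n L(X_i) ≥ η}, applied to an i.i.d. observation sequence. Then for every N ≥ 1 the crossing probability is larger under ν̄0, i.e. P_∞^{ν̄0}(τ ≤ N) ≥ P_∞^{ν0}(τ ≤ N), and consequently the mean time to false alarm satisfies E_∞^{ν0}[τ] ≥ E_∞^{ν̄0}[τ]. -/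
open MeasureTheory ProbabilityTheory ENNReal

/-- A probability measure `μ` on `ℝ` is stochastically larger than `μ'` if
`μ [t, ∞) ≥ μ' [t, ∞)` for every `t`. -/
def StochLarger (μ μ' : Measure ℝ) : Prop :=
  ∀ t : ℝ, μ' (Set.Ici t) ≤ μ (Set.Ici t)

/-- The CUSUM statistic `max_{1 ≤ k ≤ n} ∑_{i=k}^n L(X_i)` at time `n ≥ 1`
(junk value `0` for `n = 0`). -/
noncomputable def cusumS {𝒳 : Type*} (L : 𝒳 → ℝ) (ω : ℕ → 𝒳) (n : ℕ) : ℝ :=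
  if h : (Finset.Icc 1 n).Nonempty then
    (Finset.Icc 1 n).sup' h fun k => ∑ i ∈ Finset.Icc k n, L (ω i)
  else 0

/-- The CUSUM stopping time `τ = inf {n ≥ 1 : max_{1 ≤ k ≤ n} ∑_{i=k}^n L(X_i) ≥ η}`,
with value `∞` if the threshold is never crossed. -/
noncomputable def tauC {𝒳 : Type*} (L : 𝒳 → ℝ) (η : ℝ) (ω : ℕ → 𝒳) : ℕ∞ :=
  sInf {m : ℕ∞ | ∃ n : ℕ, m = n ∧ 1 ≤ n ∧ η ≤ cusumS L ω n}

lemma stoch_Ioi {μ μ' : Measure ℝ} (h : StochLarger μ μ') (a : ℝ) :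
    μ' (Set.Ioi a) ≤ μ (Set.Ioi a) := by
  have hU : ∀ (ν : Measure ℝ), ν (Set.Ioi a) = ⨆ n : ℕ, ν (Set.Ici (a + 1/(n+1))) := by
    intro ν
    have hmono : Monotone (fun n : ℕ => Set.Ici (a + 1/(n+1) : ℝ)) := by
      intro m n hmn
      apply Set.Ici_subset_Ici.2
      gcongr
    have hun : (⋃ n : ℕ, Set.Ici (a + 1/(n+1) : ℝ)) = Set.Ioi a := by
      ext x
      simp only [Set.mem_iUnion, Set.mem_Ici, Set.mem_Ioi]
      constructor
      · rintro ⟨n, hn⟩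
        have : (0:ℝ) < 1/(n+1) := by positivity
        linarith
      · intro hx
        obtain ⟨n, hn⟩ := exists_nat_one_div_lt (by linarith : (0:ℝ) < x - a)
        exact ⟨n, by linarith⟩
    rw [← hun, hmono.measure_iUnion]
  rw [hU μ, hU μ']
  exact iSup_mono fun n => h _

lemma stoch_upper {μ μ' : Measure ℝ} [IsProbabilityMeasure μ] [IsProbabilityMeasure μ']
    (h : StochLarger μ μ') {S : Set ℝ} (hS : ∀ ⦃a b : ℝ⦄, a ≤ b → a ∈ S → b ∈ S) :
    μ' S ≤ μ S := by
  rcases S.eq_empty_or_nonempty with rfl | hne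
  · simp
  by_cases hc : Sᶜ.Nonempty
  · obtain ⟨b, hb⟩ := hc
    have hlb : b ∈ lowerBounds S := fun x hx => by
      by_contra hbx
      exact hb (hS (le_of_not_ge hbx) hx)
    have hbdd : BddBelow S := ⟨b, hlb⟩
    set a := sInf S with ha
    have hIoi : Set.Ioi a ⊆ S := by
      intro x hx
      obtain ⟨y, hy, hyx⟩ := (csInf_lt_iff hbdd hne).mp hx
      exact hS hyx.le hy
    have hIci : S ⊆ Set.Ici a := fun x hx => csInf_le hbdd hx
    by_cases haS : a ∈ S
    · have : S = Set.Ici a := Set.Subset.antisymm hIci (fun x hx => hS hx haS)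
      rw [this]; exact h a
    · have : S = Set.Ioi a := by
        refine Set.Subset.antisymm (fun x hx => ?_) hIoi
        rcases lt_or_eq_of_le (Set.mem_Ici.mp (hIci hx)) with h' | h'
        · exact h'
        · exact absurd (h' ▸ hx) haS
      rw [this]; exact stoch_Ioi h a
  · have hSu : S = Set.univ := by
      rw [Set.not_nonempty_iff_eq_empty, Set.compl_empty_iff] at hc
      exact hc
    rw [hSu]
    simp

lemma lintegral_mono_stoch {μ μ' : Measure ℝ} [IsProbabilityMeasure μ] [IsProbabilityMeasure μ']
    (h : StochLarger μ μ') {f : ℝ → ℝ≥0∞} (hfm : Measurable f) (hmono : Monotone f)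
    (hbd : ∀ x, f x ≤ 1) :
    ∫⁻ x, f x ∂μ' ≤ ∫⁻ x, f x ∂μ := by
  set g : ℝ → ℝ := fun x => (f x).toReal with hg
  have hnt : ∀ x, f x ≠ ⊤ := fun x => ((hbd x).trans_lt one_lt_top).ne
  have hof : ∀ x, ENNReal.ofReal (g x) = f x := fun x => ENNReal.ofReal_toReal (hnt x)
  have hgmono : Monotone g := fun a b hab => ENNReal.toReal_mono (hnt b) (hmono hab)
  have hgm : Measurable g := hfm.ennreal_toReal
  have key : ∀ ν : Measure ℝ, ∫⁻ x, f x ∂ν = ∫⁻ t in Set.Ioi 0, ν {a : ℝ | t ≤ g a} := by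
    intro ν
    rw [← lintegral_eq_lintegral_meas_le ν (Filter.Eventually.of_forall fun x => ENNReal.toReal_nonneg)
      hgm.aemeasurable]
    exact lintegral_congr fun x => (hof x).symm
  rw [key μ, key μ']
  refine lintegral_mono fun t => ?_
  exact stoch_upper h (fun a b hab ha => le_trans ha (hgmono hab))

lemma insertNth_zero_mono {n : ℕ} {x x' : ℝ} {z z' : Fin n → ℝ} (hx : x ≤ x') (hz : z ≤ z') :
    (Fin.insertNth 0 x z : Fin (n+1) → ℝ) ≤ Fin.insertNth 0 x' z' := by
  intro i
  refine Fin.cases ?_ (fun j => ?_) i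
  · simpa using hx
  · have h0 : (j.succ : Fin (n+1)) = (0 : Fin (n+1)).succAbove j := by
      simp [Fin.succAbove_zero]
    rw [h0, Fin.insertNth_apply_succAbove, Fin.insertNth_apply_succAbove]
    exact hz j

lemma pi_upper : ∀ (n : ℕ) {μ μ' : Measure ℝ} [IsProbabilityMeasure μ] [IsProbabilityMeasure μ']
    (_ : StochLarger μ μ') {A : Set (Fin n → ℝ)} (_ : MeasurableSet A)
    (_ : ∀ x y : Fin n → ℝ, x ≤ y → x ∈ A → y ∈ A),
    Measure.pi (fun _ => μ') A ≤ Measure.pi (fun _ => μ) A := by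
  intro n
  induction n with
  | zero =>
    intro μ μ' _ _ h A hA hup
    rcases A.eq_empty_or_nonempty with rfl | hne
    · simp
    · have hAu : A = Set.univ := by
        obtain ⟨y, hy⟩ := hne
        ext x
        simp only [Set.mem_univ, iff_true]
        rwa [Subsingleton.elim x y]
      rw [hAu]
      simp
  | succ n ih =>
    intro μ μ' _ _ h A hA hup
    set e := MeasurableEquiv.piFinSuccAbove (fun _ : Fin (n+1) => ℝ) 0 with he
    set B := e.symm ⁻¹' A with hB
    have hBm : MeasurableSet B := e.symm.measurable hA
    have hsymm : ∀ (x : ℝ) (z : Fin n → ℝ), e.symm (x, z) = Fin.insertNth 0 x z := by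
      intro x z
      simp [he, MeasurableEquiv.piFinSuccAbove, Fin.insertNthEquiv]
    have hkey : ∀ (ν : Measure ℝ) [IsProbabilityMeasure ν],
        Measure.pi (fun _ : Fin (n+1) => ν) A
          = ∫⁻ x, Measure.pi (fun _ : Fin n => ν) (Prod.mk x ⁻¹' B) ∂ν := by
      intro ν _
      have hmp := (measurePreserving_piFinSuccAbove (fun _ : Fin (n+1) => ν) 0).symm e
      rw [← hmp.measure_preimage hA.nullMeasurableSet, ← hB,
        Measure.prod_apply hBm]
    rw [hkey μ, hkey μ']
    -- sections
    have hsec_up : ∀ x : ℝ, ∀ z z' : Fin n → ℝ, z ≤ z' →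
        z ∈ Prod.mk x ⁻¹' B → z' ∈ Prod.mk x ⁻¹' B := by
      intro x z z' hzz hzB
      simp only [Set.mem_preimage, hB, hsymm] at hzB ⊢
      exact hup _ _ (insertNth_zero_mono le_rfl hzz) hzB
    have hsec_m : ∀ x : ℝ, MeasurableSet (Prod.mk x ⁻¹' B) := fun x =>
      measurable_prodMk_left hBm
    have step1 : ∀ x : ℝ, Measure.pi (fun _ : Fin n => μ') (Prod.mk x ⁻¹' B)
        ≤ Measure.pi (fun _ : Fin n => μ) (Prod.mk x ⁻¹' B) := fun x =>
      ih h (hsec_m x) (hsec_up x)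
    refine le_trans (lintegral_mono fun x => step1 x) ?_
    refine lintegral_mono_stoch h (measurable_measure_prodMk_left hBm) ?_ ?_
    · intro x x' hxx
      refine measure_mono fun z hz => ?_
      simp only [Set.mem_preimage, hB, hsymm] at hz ⊢
      exact hup _ _ (insertNth_zero_mono hxx le_rfl) hz
    · intro x
      exact prob_le_one

lemma cusumS_congr {𝒳 𝒴 : Type*} {L : 𝒳 → ℝ} {L' : 𝒴 → ℝ} {ω : ℕ → 𝒳} {ω' : ℕ → 𝒴} {n : ℕ}
    (h : ∀ i, 1 ≤ i → i ≤ n → L (ω i) = L' (ω' i)) : cusumS L ω n = cusumS L' ω' n := by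
  unfold cusumS
  split_ifs with hne
  · refine Finset.sup'_congr hne rfl fun k hk => ?_
    rw [Finset.mem_Icc] at hk
    refine Finset.sum_congr rfl fun i hi => ?_
    rw [Finset.mem_Icc] at hi
    exact h i (le_trans hk.1 hi.1) hi.2
  · rfl

lemma cusumS_mono {y y' : ℕ → ℝ} (h : ∀ i, y i ≤ y' i) (n : ℕ) :
    cusumS id y n ≤ cusumS id y' n := by
  unfold cusumS
  split_ifs with hne
  · refine Finset.sup'_le hne _ fun k hk => ?_
    exact le_trans (Finset.sum_le_sum fun i _ => h i)
      (Finset.le_sup' (fun k => ∑ i ∈ Finset.Icc k n, id (y' i)) hk)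
  · exact le_refl 0

lemma tauC_le_iff {𝒳 : Type*} (L : 𝒳 → ℝ) (η : ℝ) (ω : ℕ → 𝒳) (N : ℕ) :
    tauC L η ω ≤ (N : ℕ∞) ↔ ∃ n : ℕ, 1 ≤ n ∧ n ≤ N ∧ η ≤ cusumS L ω n := by
  constructor
  · intro hle
    by_contra hcon
    push_neg at hcon
    have hN1 : ((N:ℕ∞) + 1) ≤ tauC L η ω := by
      refine le_sInf fun m hm => ?_
      obtain ⟨n, rfl, h1, hc⟩ := hm
      have hnN : ¬ n ≤ N := fun hle' => absurd hc (hcon n h1 hle').not_ge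
      have : N + 1 ≤ n := by omega
      exact_mod_cast this
    have : (N : ℕ∞) < (N:ℕ∞) + 1 := by
      exact_mod_cast Nat.lt_succ_self N
    exact absurd hle (not_le.2 (lt_of_lt_of_le this hN1))
  · rintro ⟨n, h1, hn, hc⟩
    refine le_trans (sInf_le ⟨n, rfl, h1, hc⟩) ?_
    exact_mod_cast hn

/-- Extension of a finite vector to a sequence, with coordinates `1..N`. -/
noncomputable def vext (N : ℕ) (y : Fin N → ℝ) : ℕ → ℝ :=
  fun m => if h : 1 ≤ m ∧ m ≤ N then y ⟨m - 1, by omega⟩ else 0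

/-- The crossing event as a set of finite vectors. -/
noncomputable def crossSet (η : ℝ) (N : ℕ) : Set (Fin N → ℝ) :=
  {y | ∃ n : ℕ, 1 ≤ n ∧ n ≤ N ∧ η ≤ cusumS id (vext N y) n}

lemma crossSet_measurable (η : ℝ) (N : ℕ) : MeasurableSet (crossSet η N) := by
  have hvm : ∀ i : ℕ, Measurable fun y : Fin N → ℝ => vext N y i := by
    intro i
    unfold vext
    split_ifs with h
    · exact measurable_pi_apply _
    · exact measurable_const
  have hrw : crossSet η N = ⋃ n ∈ Finset.Icc 1 N, ⋃ k ∈ Finset.Icc 1 n,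
      {y : Fin N → ℝ | η ≤ ∑ i ∈ Finset.Icc k n, vext N y i} := by
    ext y
    simp only [crossSet, Set.mem_setOf_eq, Set.mem_iUnion, Finset.mem_Icc, exists_prop]
    constructor
    · rintro ⟨n, h1, hn, hc⟩
      have hne : (Finset.Icc 1 n).Nonempty := by
        rw [Finset.nonempty_Icc]; omega
      rw [cusumS, dif_pos hne, Finset.le_sup'_iff] at hc
      obtain ⟨k, hk, hck⟩ := hc
      rw [Finset.mem_Icc] at hk
      exact ⟨n, ⟨h1, hn⟩, k, hk, by simpa using hck⟩
    · rintro ⟨n, ⟨h1, hn⟩, k, hk, hck⟩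
      refine ⟨n, h1, hn, ?_⟩
      have hne : (Finset.Icc 1 n).Nonempty := by
        rw [Finset.nonempty_Icc]; omega
      rw [cusumS, dif_pos hne, Finset.le_sup'_iff]
      exact ⟨k, Finset.mem_Icc.2 hk, by simpa using hck⟩
  rw [hrw]
  refine Finset.measurableSet_biUnion _ fun n _ => ?_
  refine Finset.measurableSet_biUnion _ fun k _ => ?_
  exact measurableSet_le measurable_const (Finset.measurable_sum _ fun i _ => hvm i)

lemma crossSet_upper (η : ℝ) (N : ℕ) {y y' : Fin N → ℝ} (h : y ≤ y') (hy : y ∈ crossSet η N) :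
    y' ∈ crossSet η N := by
  obtain ⟨n, h1, hn, hc⟩ := hy
  refine ⟨n, h1, hn, le_trans hc (cusumS_mono (fun i => ?_) n)⟩
  unfold vext
  split_ifs with hi
  · exact h _
  · exact le_refl 0

lemma event_eq_preimage {𝒳 : Type*} (L : 𝒳 → ℝ) (η : ℝ) (N : ℕ) :
    {ω : ℕ → 𝒳 | tauC L η ω ≤ (N : ℕ∞)}
      = (fun (ω : ℕ → 𝒳) (i : Fin N) => L (ω ((i : ℕ) + 1))) ⁻¹' crossSet η N := by
  have key : ∀ (ω : ℕ → 𝒳) (n : ℕ), 1 ≤ n → n ≤ N →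
      cusumS L ω n
        = cusumS id (vext N (fun (i : Fin N) => L (ω ((i : ℕ) + 1)))) n := by
    intro ω n h1 hn
    refine cusumS_congr fun i hi1 hin => ?_
    have hiN : i ≤ N := le_trans hin hn
    show L (ω i) = id (vext N _ i)
    rw [id, vext, dif_pos ⟨hi1, hiN⟩]
    have : i - 1 + 1 = i := by omega
    simp only [this]
  ext ω
  simp only [Set.mem_setOf_eq, Set.mem_preimage, crossSet, tauC_le_iff]
  constructor <;> rintro ⟨n, h1, hn, hc⟩ <;> refine ⟨n, h1, hn, ?_⟩
  · rwa [← key ω n h1 hn]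
  · rwa [key ω n h1 hn]

lemma joint_law {𝒳 : Type*} [MeasurableSpace 𝒳] {L : 𝒳 → ℝ} (hL : Measurable L)
    (ν : Measure 𝒳) [IsProbabilityMeasure ν]
    (P : Measure (ℕ → 𝒳)) [IsProbabilityMeasure P]
    (hind : iIndepFun (fun (n : ℕ) (ω : ℕ → 𝒳) => ω n) P)
    (hmarg : ∀ n : ℕ, 1 ≤ n → P.map (fun ω => ω n) = ν) (N : ℕ) :
    P.map (fun (ω : ℕ → 𝒳) (i : Fin N) => L (ω ((i : ℕ) + 1)))
      = Measure.pi (fun _ : Fin N => ν.map L) := by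
  have hJm : Measurable (fun (ω : ℕ → 𝒳) (i : Fin N) => L (ω ((i : ℕ) + 1))) :=
    measurable_pi_lambda _ fun i => hL.comp (measurable_pi_apply _)
  haveI : IsProbabilityMeasure (ν.map L) := Measure.isProbabilityMeasure_map hL.aemeasurable
  refine (Measure.pi_eq fun s hs => ?_).symm
  rw [Measure.map_apply hJm (MeasurableSet.univ_pi hs)]
  classical
  set t : ℕ → Set 𝒳 := fun m =>
    if h : 1 ≤ m ∧ m ≤ N then L ⁻¹' s ⟨m - 1, by omega⟩ else Set.univ with ht
  have htval : ∀ i : Fin N, t ((i : ℕ) + 1) = L ⁻¹' s i := by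
    intro i
    have h : 1 ≤ (i : ℕ) + 1 ∧ (i : ℕ) + 1 ≤ N := ⟨by omega, by omega⟩
    simp only [ht]
    rw [dif_pos h]
    have : (⟨(i : ℕ) + 1 - 1, by omega⟩ : Fin N) = i := Fin.ext (by simp)
    rw [this]
  have htm : ∀ m, MeasurableSet (t m) := by
    intro m
    by_cases h : 1 ≤ m ∧ m ≤ N
    · simp only [ht]; rw [dif_pos h]; exact hL (hs _)
    · simp only [ht]; rw [dif_neg h]; exact MeasurableSet.univ
  have hpre : (fun (ω : ℕ → 𝒳) (i : Fin N) => L (ω ((i : ℕ) + 1))) ⁻¹' Set.pi Set.univ s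
      = ⋂ m ∈ Finset.Icc 1 N, (fun (ω : ℕ → 𝒳) => ω m) ⁻¹' (t m) := by
    ext ω
    simp only [Set.mem_preimage, Set.mem_pi, Set.mem_univ, forall_true_left, Set.mem_iInter,
      Finset.mem_Icc, and_imp]
    constructor
    · intro hall m h1 h2
      simp only [Set.mem_preimage, ht]
      rw [dif_pos ⟨h1, h2⟩]
      have := hall ⟨m - 1, by omega⟩
      simp only [Set.mem_preimage] at this ⊢
      have hm : m - 1 + 1 = m := by omega
      rw [hm] at this
      exact this
    · intro hall i
      have h1 : 1 ≤ (i : ℕ) + 1 := by omega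
      have h2 : (i : ℕ) + 1 ≤ N := by omega
      have hmem := hall ((i : ℕ) + 1) h1 h2
      rw [htval i] at hmem
      exact hmem
  rw [hpre]
  rw [hind.meas_biInter (fun m _ => ⟨t m, htm m, rfl⟩)]
  have hfac : ∀ m ∈ Finset.Icc 1 N, P ((fun (ω : ℕ → 𝒳) => ω m) ⁻¹' t m) = ν (t m) := by
    intro m hm
    rw [Finset.mem_Icc] at hm
    rw [← Measure.map_apply (measurable_pi_apply m) (htm m), hmarg m hm.1]
  rw [Finset.prod_congr rfl hfac]
  refine Finset.prod_bij' (fun (m : ℕ) (hm : m ∈ Finset.Icc 1 N) =>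
      (⟨m - 1, by rw [Finset.mem_Icc] at hm; omega⟩ : Fin N))
    (fun (i : Fin N) _ => (i : ℕ) + 1) (fun m hm => Finset.mem_univ _)
    (fun i _ => by
      have hi := i.isLt
      simp only [Finset.mem_Icc]
      omega) ?_ ?_ ?_
  · intro m hm
    rw [Finset.mem_Icc] at hm
    simp only
    omega
  · intro i _
    exact Fin.ext (by simp)
  · intro m hm
    rw [Finset.mem_Icc] at hm
    have : t m = L ⁻¹' s ⟨m - 1, by omega⟩ := by
      simp only [ht]; rw [dif_pos ⟨hm.1, hm.2⟩]
    rw [this, Measure.map_apply hL (hs _)]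

lemma enat_cast_eq_tsum (m : ℕ∞) :
    (m : ℝ≥0∞) = ∑' N : ℕ, if (N : ℕ∞) < m then (1 : ℝ≥0∞) else 0 := by
  cases m with
  | top =>
    have : ∀ N : ℕ, (if ((N : ℕ∞) < (⊤ : ℕ∞)) then (1 : ℝ≥0∞) else 0) = 1 := fun N =>
      if_pos (lt_top_iff_ne_top.2 (ENat.coe_ne_top N))
    simp only [this]
    rw [ENNReal.tsum_const_eq_top_of_ne_zero one_ne_zero]
    simp
  | coe k =>
    have hsum : ∑' N : ℕ, (if ((N : ℕ∞) < (k : ℕ∞)) then (1 : ℝ≥0∞) else 0)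
        = ∑ N ∈ Finset.range k, (if ((N : ℕ∞) < (k : ℕ∞)) then (1 : ℝ≥0∞) else 0) := by
      refine tsum_eq_sum fun N hN => ?_
      rw [Finset.mem_range, not_lt] at hN
      exact if_neg (by exact_mod_cast not_lt.2 hN)
    rw [hsum]
    have : ∀ N ∈ Finset.range k, (if ((N : ℕ∞) < (k : ℕ∞)) then (1 : ℝ≥0∞) else 0) = 1 := by
      intro N hN
      rw [Finset.mem_range] at hN
      exact if_pos (by exact_mod_cast hN)
    rw [Finset.sum_congr rfl this]
    simp

lemma lintegral_enat_eq_tsum {α : Type*} [MeasurableSpace α] (P : Measure α) (τ : α → ℕ∞)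
    (hm : ∀ N : ℕ, MeasurableSet {ω | τ ω ≤ (N : ℕ∞)}) :
    ∫⁻ ω, (τ ω : ℝ≥0∞) ∂P = ∑' N : ℕ, P {ω | (N : ℕ∞) < τ ω} := by
  have hset : ∀ N : ℕ, MeasurableSet {ω | (N : ℕ∞) < τ ω} := by
    intro N
    have : {ω | (N : ℕ∞) < τ ω} = {ω | τ ω ≤ (N : ℕ∞)}ᶜ := by
      ext ω; simp [not_le]
    rw [this]
    exact (hm N).compl
  have hind : ∀ (N : ℕ) (ω : α), (if (N : ℕ∞) < τ ω then (1 : ℝ≥0∞) else 0)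
      = Set.indicator {ω | (N : ℕ∞) < τ ω} (fun _ => (1 : ℝ≥0∞)) ω := by
    intro N ω
    rw [Set.indicator_apply]
    rfl
  calc ∫⁻ ω, (τ ω : ℝ≥0∞) ∂P
      = ∫⁻ ω, ∑' N : ℕ, (if (N : ℕ∞) < τ ω then (1 : ℝ≥0∞) else 0) ∂P := by
        congr 1
        ext ω
        exact enat_cast_eq_tsum (τ ω)
    _ = ∑' N : ℕ, ∫⁻ ω, (if (N : ℕ∞) < τ ω then (1 : ℝ≥0∞) else 0) ∂P := by
        refine lintegral_tsum fun N => ?_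
        simp_rw [hind N]
        exact (measurable_const.indicator (hset N)).aemeasurable
    _ = ∑' N : ℕ, P {ω | (N : ℕ∞) < τ ω} := by
        refine tsum_congr fun N => ?_
        simp_rw [hind N]
        rw [lintegral_indicator (hset N)]
        simp

/-- Let `L : 𝒳 → ℝ` be measurable, `η ∈ ℝ`, and let `ν0, ν̄0` be probability
measures on `𝒳` such that the pushforward of `ν̄0` under `L` is stochastically larger than that
of `ν0`.  Let `τ` be the CUSUM stopping time with statistic `L` and threshold `η`, applied to an
i.i.d. observation sequence.  Then for every `N ≥ 1`, `P_∞^{ν̄0}(τ ≤ N) ≥ P_∞^{ν0}(τ ≤ N)`, and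
consequently `E_∞^{ν0}[τ] ≥ E_∞^{ν̄0}[τ]`. -/
theorem stmt_8 {𝒳 : Type*} [MeasurableSpace 𝒳]
    (L : 𝒳 → ℝ) (hL : Measurable L) (η : ℝ)
    (ν0 νb0 : Measure 𝒳) [IsProbabilityMeasure ν0] [IsProbabilityMeasure νb0]
    (hdom : StochLarger (νb0.map L) (ν0.map L))
    -- `Pinf` and `Pbinf` are the i.i.d. laws of the observation sequence under `ν0` and `ν̄0`
    (Pinf Pbinf : Measure (ℕ → 𝒳)) [IsProbabilityMeasure Pinf] [IsProbabilityMeasure Pbinf]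
    (hPindep : iIndepFun (fun (n : ℕ) (ω : ℕ → 𝒳) => ω n) Pinf)
    (hPbindep : iIndepFun (fun (n : ℕ) (ω : ℕ → 𝒳) => ω n) Pbinf)
    (hPmarg : ∀ n : ℕ, 1 ≤ n → Pinf.map (fun ω => ω n) = ν0)
    (hPbmarg : ∀ n : ℕ, 1 ≤ n → Pbinf.map (fun ω => ω n) = νb0) :
    (∀ N : ℕ, 1 ≤ N →
      Pinf {ω | tauC L η ω ≤ (N : ℕ∞)} ≤ Pbinf {ω | tauC L η ω ≤ (N : ℕ∞)}) ∧
    ∫⁻ ω, (tauC L η ω : ℝ≥0∞) ∂Pbinf ≤ ∫⁻ ω, (tauC L η ω : ℝ≥0∞) ∂Pinf := by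
  haveI hp0 : IsProbabilityMeasure (ν0.map L) := Measure.isProbabilityMeasure_map hL.aemeasurable
  haveI hpb : IsProbabilityMeasure (νb0.map L) := Measure.isProbabilityMeasure_map hL.aemeasurable
  have hJm : ∀ N : ℕ, Measurable (fun (ω : ℕ → 𝒳) (i : Fin N) => L (ω ((i : ℕ) + 1))) :=
    fun N => measurable_pi_lambda _ fun i => hL.comp (measurable_pi_apply _)
  have hmeasτ : ∀ N : ℕ, MeasurableSet {ω : ℕ → 𝒳 | tauC L η ω ≤ (N : ℕ∞)} := by
    intro N
    rw [event_eq_preimage L η N]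
    exact (hJm N) (crossSet_measurable η N)
  have hpart1 : ∀ N : ℕ,
      Pinf {ω | tauC L η ω ≤ (N : ℕ∞)} ≤ Pbinf {ω | tauC L η ω ≤ (N : ℕ∞)} := by
    intro N
    rw [event_eq_preimage L η N,
      ← Measure.map_apply (hJm N) (crossSet_measurable η N),
      ← Measure.map_apply (hJm N) (crossSet_measurable η N),
      joint_law hL ν0 Pinf hPindep hPmarg N,
      joint_law hL νb0 Pbinf hPbindep hPbmarg N]
    exact pi_upper N hdom (crossSet_measurable η N)
      (fun x y hxy hx => crossSet_upper η N hxy hx)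
  refine ⟨fun N _ => hpart1 N, ?_⟩
  rw [lintegral_enat_eq_tsum Pbinf _ hmeasτ, lintegral_enat_eq_tsum Pinf _ hmeasτ]
  refine ENNReal.tsum_le_tsum fun N => ?_
  have hcomp : {ω : ℕ → 𝒳 | (N : ℕ∞) < tauC L η ω} = {ω | tauC L η ω ≤ (N : ℕ∞)}ᶜ := by
    ext ω; simp [not_le]
  rw [hcomp, prob_compl_eq_one_sub (hmeasτ N), prob_compl_eq_one_sub (hmeasτ N)]
  exact tsub_le_tsub_left (hpart1 N) 1
end

section
/- Let (𝒳,𝓕) be a measurable space, let ν0 and ν̲1 be probability measures on 𝒳 with ν̲1 ≪ ν0, and let L* = log(dν̲1/dν0) be continuous on the support of ν0. Let ν1 be a probability measure on 𝒳 such that the pushforward of ν1 under L* is stochastically larger than the pushforward of ν̲1 under L*. Let τ_C* = inf{n ≥ 1 : max_{1≤k≤n} Σ_{i=k}^n L*(X_i) ≥ η} be the CUSUM stopping time with threshold η ∈ ℝ. Then for every change point λ ≥ 1 and every integer N ≥ 0, almost surely P_λ^{ν0,ν̲1}( (τ_C* − λ + 1)^+ ≤ N | 𝓕_{λ−1} )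 ≤ P_λ^{ν0,ν1}( (τ_C* − λ + 1)^+ ≤ N | 𝓕_{λ−1} ); consequently, almost surely E_λ^{ν0,ν̲1}[ (τ_C* − λ + 1)^+ | 𝓕_{λ−1} ] ≥ E_λ^{ν0,ν1}[ (τ_C* − λ + 1)^+ | 𝓕_{λ−1} ]. -/
open MeasureTheory ProbabilityTheory ENNReal

/-- The (topological) support of a measure: points all of whose open neighbourhoods have
positive measure. -/
def measSupport {𝒳 : Type*} [TopologicalSpace 𝒳] [MeasurableSpace 𝒳] (μ : Measure 𝒳) : Set 𝒳 :=
  {x | ∀ U : Set 𝒳, IsOpen U → x ∈ U → 0 < μ U}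

/-- `𝓕_m`: the σ-algebra generated by the observations `X_1, …, X_m` on the sequence space. -/
def obsSigma (𝒳 : Type*) [m𝒳 : MeasurableSpace 𝒳] (m : ℕ) : MeasurableSpace (ℕ → 𝒳) :=
  ⨆ i ∈ Finset.Icc 1 m, MeasurableSpace.comap (fun ω : ℕ → 𝒳 => ω i) m𝒳

section AuxLemmas

set_option linter.unusedVariables false
set_option linter.unusedSectionVars false

lemma aux_upper_class {U : Set ℝ} (hU : IsUpperSet U) :
    U = ∅ ∨ U = Set.univ ∨ (∃ c, U = Set.Ici c) ∨ (∃ c, U = Set.Ioi c) := by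
  rcases U.eq_empty_or_nonempty with h | hne
  · exact Or.inl h
  by_cases hbd : BddBelow U
  · set c := sInf U with hc
    have hsub : U ⊆ Set.Ici c := fun u hu => csInf_le hbd hu
    have hsup : Set.Ioi c ⊆ U := fun r hr => by
      obtain ⟨u, hu, hur⟩ := exists_lt_of_csInf_lt hne hr
      exact hU hur.le hu
    by_cases hcU : c ∈ U
    · exact Or.inr (Or.inr (Or.inl ⟨c, subset_antisymm hsub (fun r hr => hU hr hcU)⟩))
    · refine Or.inr (Or.inr (Or.inr ⟨c, subset_antisymm (fun u hu => ?_) hsup⟩))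
      exact (lt_of_le_of_ne (show c ≤ u from hsub hu) (fun h => hcU (h ▸ hu)) : c < u)
  · refine Or.inr (Or.inl (Set.eq_univ_of_forall fun r => ?_))
    obtain ⟨u, hu, hur⟩ := (not_bddBelow_iff.mp hbd) r
    exact hU hur.le hu

variable {𝒳 : Type*} [MeasurableSpace 𝒳]

/-- Measure comparison on `L`-upper sets. -/
lemma aux_meas_le_of_upper (L : 𝒳 → ℝ) (hL : Measurable L) (ρ σ : Measure 𝒳)
    [IsProbabilityMeasure ρ] [IsProbabilityMeasure σ]
    (hdom : ∀ t : ℝ, ρ (L ⁻¹' Set.Ici t) ≤ σ (L ⁻¹' Set.Ici t))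
    (S : Set 𝒳) (hup : ∀ t t', L t ≤ L t' → t ∈ S → t' ∈ S) : ρ S ≤ σ S := by
  set U : Set ℝ := {r | ∃ t ∈ S, L t ≤ r} with hUdef
  have hUup : IsUpperSet U := fun a b hab ⟨t, ht, hta⟩ => ⟨t, ht, hta.trans hab⟩
  have hSU : S = L ⁻¹' U := by
    apply subset_antisymm
    · exact fun t ht => ⟨t, ht, le_rfl⟩
    · rintro t ⟨t', ht', h⟩
      exact hup t' t h ht'
  rw [hSU]
  rcases aux_upper_class hUup with h | h | ⟨c, h⟩ | ⟨c, h⟩ <;> rw [h]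
  · simp
  · simp only [Set.preimage_univ]
    simp [measure_univ]
  · exact hdom c
  · have key : L ⁻¹' Set.Ioi c = ⋃ n : ℕ, L ⁻¹' Set.Ici (c + 1 / (n + 1)) := by
      ext x
      simp only [Set.mem_preimage, Set.mem_Ioi, Set.mem_iUnion, Set.mem_Ici]
      constructor
      · intro hx
        obtain ⟨n, hn⟩ := exists_nat_one_div_lt (sub_pos.2 hx)
        exact ⟨n, by linarith⟩
      · rintro ⟨n, hn⟩
        have : (0:ℝ) < 1 / (n + 1) := by positivity
        linarith
    have hmono : Monotone fun n : ℕ => L ⁻¹' Set.Ici (c + 1 / (n + 1)) := by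
      intro n₁ n₂ h x hx
      simp only [Set.mem_preimage, Set.mem_Ici] at hx ⊢
      have h1 : (1:ℝ) / (n₂ + 1) ≤ 1 / (n₁ + 1) := by
        apply one_div_le_one_div_of_le (by positivity)
        exact_mod_cast by omega
      linarith
    rw [key, Directed.measure_iUnion hmono.directed_le, Directed.measure_iUnion hmono.directed_le]
    exact iSup_mono fun n => hdom _

lemma aux_vol (a : ℝ≥0∞) : volume ({s : ℝ | ENNReal.ofReal s < a} ∩ Set.Ioi 0) = a := by
  rcases eq_or_ne a ⊤ with rfl | ha
  · have : {s : ℝ | ENNReal.ofReal s < ⊤} = Set.univ := Set.eq_univ_of_forall fun s => ofReal_lt_top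
    rw [this, Set.univ_inter, Real.volume_Ioi]
  · have : {s : ℝ | ENNReal.ofReal s < a} ∩ Set.Ioi 0 = Set.Ioo 0 a.toReal := by
      ext s
      simp only [Set.mem_inter_iff, Set.mem_setOf_eq, Set.mem_Ioi, Set.mem_Ioo]
      constructor
      · rintro ⟨h1, h2⟩
        exact ⟨h2, (ENNReal.ofReal_lt_iff_lt_toReal h2.le ha).mp h1⟩
      · rintro ⟨h1, h2⟩
        exact ⟨(ENNReal.ofReal_lt_iff_lt_toReal h1.le ha).mpr h2, h1⟩
    rw [this, Real.volume_Ioo, sub_zero, ENNReal.ofReal_toReal ha]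

lemma aux_layer (μ : Measure 𝒳) [SFinite μ] {ψ : 𝒳 → ℝ≥0∞} (hψ : Measurable ψ) :
    ∫⁻ t, ψ t ∂μ = ∫⁻ s in Set.Ioi (0:ℝ), μ {t | ENNReal.ofReal s < ψ t} := by
  have hsetm : MeasurableSet {p : 𝒳 × ℝ | ENNReal.ofReal p.2 < ψ p.1} :=
    measurableSet_lt (ENNReal.measurable_ofReal.comp measurable_snd) (hψ.comp measurable_fst)
  set F : 𝒳 → ℝ → ℝ≥0∞ := fun t s =>
    Set.indicator {p : 𝒳 × ℝ | ENNReal.ofReal p.2 < ψ p.1} 1 (t, s) with hF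
  have hFunc : Measurable (Function.uncurry F) := by
    have : Function.uncurry F =
        Set.indicator {p : 𝒳 × ℝ | ENNReal.ofReal p.2 < ψ p.1} 1 := by
      funext p; cases p; rfl
    rw [this]
    exact measurable_one.indicator hsetm
  have step1 : ∀ t, ψ t = ∫⁻ s in Set.Ioi (0:ℝ), F t s := by
    intro t
    have hFt : ∀ s, F t s = Set.indicator {s' : ℝ | ENNReal.ofReal s' < ψ t} 1 s := by
      intro s
      simp only [hF, Set.indicator_apply, Set.mem_setOf_eq, Pi.one_apply]
    simp only [hFt]
    have hm : MeasurableSet {s' : ℝ | ENNReal.ofReal s' < ψ t} :=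
      measurableSet_lt ENNReal.measurable_ofReal measurable_const
    rw [lintegral_indicator_one hm, Measure.restrict_apply hm, aux_vol]
  calc ∫⁻ t, ψ t ∂μ = ∫⁻ t, (∫⁻ s in Set.Ioi (0:ℝ), F t s) ∂μ := lintegral_congr step1
    _ = ∫⁻ s in Set.Ioi (0:ℝ), ∫⁻ t, F t s ∂μ := lintegral_lintegral_swap hFunc.aemeasurable
    _ = ∫⁻ s in Set.Ioi (0:ℝ), μ {t | ENNReal.ofReal s < ψ t} := by
        refine lintegral_congr fun s => ?_
        have hFs : ∀ t, F t s = Set.indicator {t' : 𝒳 | ENNReal.ofReal s < ψ t'} 1 t := by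
          intro t
          simp only [hF, Set.indicator_apply, Set.mem_setOf_eq, Pi.one_apply]
        simp only [hFs]
        rw [lintegral_indicator_one (measurableSet_lt measurable_const hψ)]

lemma aux_lintegral_mono_L (L : 𝒳 → ℝ) (hL : Measurable L) (ρ σ : Measure 𝒳)
    [IsProbabilityMeasure ρ] [IsProbabilityMeasure σ]
    (hdom : ∀ t : ℝ, ρ (L ⁻¹' Set.Ici t) ≤ σ (L ⁻¹' Set.Ici t))
    {ψ : 𝒳 → ℝ≥0∞} (hψ : Measurable ψ)
    (hmono : ∀ t t', L t ≤ L t' → ψ t ≤ ψ t') : ∫⁻ t, ψ t ∂ρ ≤ ∫⁻ t, ψ t ∂σ := by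
  rw [aux_layer ρ hψ, aux_layer σ hψ]
  refine lintegral_mono fun s => ?_
  exact aux_meas_le_of_upper L hL ρ σ hdom _ fun t t' hle ht => lt_of_lt_of_le ht (hmono t t' hle)

lemma aux_single_coord {ι : Type*} [Fintype ι] [DecidableEq ι]
    (L : 𝒳 → ℝ) (hL : Measurable L) (hne : Nonempty 𝒳)
    (α β : ι → Measure 𝒳) [∀ i, IsProbabilityMeasure (α i)] [∀ i, IsProbabilityMeasure (β i)]
    (i0 : ι) (hagree : ∀ i, i ≠ i0 → α i = β i)
    (hdom : ∀ t : ℝ, (α i0) (L ⁻¹' Set.Ici t) ≤ (β i0) (L ⁻¹' Set.Ici t))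
    {B : Set (ι → 𝒳)} (hB : MeasurableSet B)
    (hmono : ∀ x y : ι → 𝒳, (∀ i, i ≠ i0 → x i = y i) → L (x i0) ≤ L (y i0) → x ∈ B → y ∈ B) :
    Measure.pi α B ≤ Measure.pi β B := by
  classical
  let x₀ : ι → 𝒳 := fun _ => Classical.arbitrary 𝒳
  set f : (ι → 𝒳) → ℝ≥0∞ := B.indicator 1 with hfdef
  have hf : Measurable f := measurable_one.indicator hB
  rw [← lintegral_indicator_one hB (μ := Measure.pi α), ← lintegral_indicator_one hB,
    lintegral_eq_lmarginal_univ (μ := α) x₀, lintegral_eq_lmarginal_univ (μ := β) x₀]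
  have hins : (Finset.univ : Finset ι) = insert i0 (Finset.univ.erase i0) :=
    (Finset.insert_erase (Finset.mem_univ i0)).symm
  rw [hins, lmarginal_insert _ hf (Finset.notMem_erase i0 _),
    lmarginal_insert _ hf (Finset.notMem_erase i0 _)]
  have hmm : (∫⋯∫⁻_Finset.univ.erase i0, f ∂α) = (∫⋯∫⁻_Finset.univ.erase i0, f ∂β) := by
    unfold lmarginal
    have : (fun i : (Finset.univ.erase i0 : Finset ι) => α i) =
        (fun i : (Finset.univ.erase i0 : Finset ι) => β i) :=
      funext fun i => hagree i (Finset.ne_of_mem_erase i.2)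
    rw [this]
  rw [hmm]
  set g : (ι → 𝒳) → ℝ≥0∞ := (∫⋯∫⁻_Finset.univ.erase i0, f ∂β) with hgdef
  refine aux_lintegral_mono_L L hL (α i0) (β i0) hdom
    ((Measurable.lmarginal β hf).comp (measurable_update x₀)) ?_
  intro t t' htt'
  rw [hgdef]
  unfold lmarginal
  refine lintegral_mono fun y => ?_
  set p := Function.updateFinset (Function.update x₀ i0 t) (Finset.univ.erase i0) y with hp
  set q := Function.updateFinset (Function.update x₀ i0 t') (Finset.univ.erase i0) y with hq
  have hagreepq : ∀ i, i ≠ i0 → p i = q i := by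
    intro i hi
    simp only [hp, hq, Function.updateFinset]
    by_cases his : i ∈ Finset.univ.erase i0
    · simp [his]
    · simp [his, Function.update_of_ne hi]
  have hpi0 : p i0 = t := by
    simp [hp, Function.updateFinset, Finset.notMem_erase]
  have hqi0 : q i0 = t' := by
    simp [hq, Function.updateFinset, Finset.notMem_erase]
  by_cases hmem : p ∈ B
  · have : q ∈ B := hmono p q hagreepq (by rw [hpi0, hqi0]; exact htt') hmem
    simp [hfdef, Set.indicator_of_mem, hmem, this]
  · simp [hfdef, Set.indicator_of_notMem hmem]

lemma aux_pi_le {ι : Type*} [Fintype ι] [DecidableEq ι]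
    (L : 𝒳 → ℝ) (hL : Measurable L) (hne : Nonempty 𝒳) (s : Finset ι) :
    ∀ (μ μ' : ι → Measure 𝒳), (∀ i, IsProbabilityMeasure (μ i)) →
    (∀ i, IsProbabilityMeasure (μ' i)) →
    (∀ i ∉ s, μ i = μ' i) →
    (∀ i ∈ s, ∀ t : ℝ, (μ i) (L ⁻¹' Set.Ici t) ≤ (μ' i) (L ⁻¹' Set.Ici t)) →
    ∀ B : Set (ι → 𝒳), MeasurableSet B →
    (∀ x y : ι → 𝒳, (∀ i ∉ s, x i = y i) → (∀ i ∈ s, L (x i) ≤ L (y i)) → x ∈ B → y ∈ B) →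
    Measure.pi μ B ≤ Measure.pi μ' B := by
  classical
  induction s using Finset.induction_on with
  | empty =>
    intro μ μ' h1 h2 hagree _ B hB _
    have : μ = μ' := funext fun i => hagree i (by simp)
    rw [this]
  | @insert i0 s hi0 IH =>
    intro μ μ' h1 h2 hagree hdom B hB hmono
    set ν : ι → Measure 𝒳 := fun i => if i = i0 then μ' i0 else μ i with hν
    have hνprob : ∀ i, IsProbabilityMeasure (ν i) := by
      intro i; simp only [hν]; split
      · exact h2 i0
      · exact h1 i
    haveI := h1; haveI := h2; haveI := hνprob
    have step1 : Measure.pi μ B ≤ Measure.pi ν B := by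
      refine aux_single_coord L hL hne μ ν i0 (fun i hi => by simp [hν, hi]) ?_ hB ?_
      · have : ν i0 = μ' i0 := by simp [hν]
        rw [this]
        exact hdom i0 (Finset.mem_insert_self i0 s)
      · intro x y hxy hLxy hx
        refine hmono x y (fun i hi => hxy i (fun h => hi (h ▸ Finset.mem_insert_self i0 s))) ?_ hx
        intro i hi
        rcases Finset.mem_insert.mp hi with rfl | his
        · exact hLxy
        · have : i ≠ i0 := fun h => hi0 (h ▸ his)
          rw [hxy i this]
    have step2 : Measure.pi ν B ≤ Measure.pi μ' B := by
      refine IH ν μ' hνprob h2 ?_ ?_ B hB ?_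
      · intro i hi
        by_cases h : i = i0
        · subst h; simp [hν]
        · have : i ∉ insert i0 s := by simp [h, hi]
          simp [hν, h, hagree i this]
      · intro i hi t
        have h : i ≠ i0 := fun h => hi0 (h ▸ hi)
        have : ν i = μ i := by simp [hν, h]
        rw [this]
        exact hdom i (Finset.mem_insert_of_mem hi) t
      · intro x y hxy hLxy hx
        refine hmono x y (fun i hi => hxy i (fun h => hi (Finset.mem_insert_of_mem h))) ?_ hx
        intro i hi
        rcases Finset.mem_insert.mp hi with rfl | his
        · rw [hxy i hi0]
        · exact hLxy i his
    exact step1.trans step2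

lemma aux_cusum_congr (L : 𝒳 → ℝ) (ω ω' : ℕ → 𝒳) (n : ℕ)
    (h : ∀ i, 1 ≤ i → i ≤ n → ω i = ω' i) : cusumS L ω n = cusumS L ω' n := by
  unfold cusumS
  split
  · refine Finset.sup'_congr _ rfl fun k hk => ?_
    refine Finset.sum_congr rfl fun i hi => ?_
    rw [Finset.mem_Icc] at hk hi
    rw [h i (le_trans hk.1 hi.1) hi.2]
  · rfl

lemma aux_cusum_mono (L : 𝒳 → ℝ) (ω ω' : ℕ → 𝒳) (n : ℕ)
    (h : ∀ i, 1 ≤ i → i ≤ n → L (ω i) ≤ L (ω' i)) : cusumS L ω n ≤ cusumS L ω' n := by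
  unfold cusumS
  split
  · next hne =>
    refine Finset.sup'_mono_fun fun k hk => ?_
    refine Finset.sum_le_sum fun i hi => ?_
    rw [Finset.mem_Icc] at hk hi
    exact h i (le_trans hk.1 hi.1) hi.2
  · exact le_rfl

lemma aux_cusum_meas (L : 𝒳 → ℝ) (hL : Measurable L) (n : ℕ) :
    Measurable fun ω : ℕ → 𝒳 => cusumS L ω n := by
  unfold cusumS
  by_cases h : (Finset.Icc 1 n).Nonempty
  · simp only [dif_pos h]
    have H := Finset.measurable_sup' h (f := fun k (ω : ℕ → 𝒳) => ∑ i ∈ Finset.Icc k n, L (ω i))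
      (fun k _ => Finset.measurable_sum _ fun i _ => hL.comp (measurable_pi_apply i))
    have : ((Finset.Icc 1 n).sup' h fun k (ω : ℕ → 𝒳) => ∑ i ∈ Finset.Icc k n, L (ω i)) =
        fun ω => (Finset.Icc 1 n).sup' h fun k => ∑ i ∈ Finset.Icc k n, L (ω i) := by
      funext ω
      exact Finset.sup'_apply h _ ω
    rwa [this] at H
  · simp only [dif_neg h]
    exact measurable_const

lemma aux_tau_le_iff (L : 𝒳 → ℝ) (η : ℝ) (ω : ℕ → 𝒳) (lam N : ℕ) (hlam : 1 ≤ lam) :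
    tauC L η ω + 1 - (lam : ℕ∞) ≤ (N : ℕ∞) ↔
      ∃ n : ℕ, 1 ≤ n ∧ n ≤ lam - 1 + N ∧ η ≤ cusumS L ω n := by
  set m := lam - 1 + N with hm
  rw [tsub_le_iff_right]
  have hcast : (N : ℕ∞) + (lam : ℕ∞) = (m : ℕ∞) + 1 := by
    rw [← Nat.cast_add, ← Nat.cast_one, ← Nat.cast_add]
    congr 1
    omega
  rw [hcast]
  have key : tauC L η ω + 1 ≤ (m : ℕ∞) + 1 ↔ tauC L η ω ≤ (m : ℕ∞) :=
    ENat.add_le_add_iff_right (by simp)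
  rw [key]
  constructor
  · intro h
    by_contra hcon
    push_neg at hcon
    have hlow : (m : ℕ∞) + 1 ≤ tauC L η ω := by
      refine le_sInf fun b hb => ?_
      obtain ⟨n, rfl, h1, hc⟩ := hb
      have : ¬ (n ≤ m) := fun hnm => absurd hc (not_le.mpr (hcon n h1 hnm))
      have : m + 1 ≤ n := by omega
      exact_mod_cast Nat.cast_le.mpr this
    have := hlow.trans h
    rw [← Nat.cast_one, ← Nat.cast_add, Nat.cast_le] at this
    omega
  · rintro ⟨n, h1, hnm, hc⟩
    exact le_trans (sInf_le ⟨n, rfl, h1, hc⟩) (Nat.cast_le.mpr hnm)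

lemma aux_enat_tsum (a : ℕ∞) :
    (a : ℝ≥0∞) = ∑' N : ℕ, (if a ≤ (N : ℕ∞) then (0 : ℝ≥0∞) else 1) := by
  classical
  induction a using ENat.recTopCoe with
  | top =>
    have : ∀ N : ℕ, (if (⊤ : ℕ∞) ≤ (N : ℕ∞) then (0 : ℝ≥0∞) else 1) = 1 := by
      intro N
      rw [if_neg]
      simp [top_le_iff]
    simp only [this, ENat.toENNReal_top]
    exact (ENNReal.tsum_const_eq_top_of_ne_zero one_ne_zero).symm
  | coe k =>
    rw [ENat.toENNReal_coe]
    rw [tsum_eq_sum (s := Finset.range k) (fun N hN => ?_)]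
    · have : ∀ N ∈ Finset.range k, (if (k : ℕ∞) ≤ (N : ℕ∞) then (0:ℝ≥0∞) else 1) = 1 := by
        intro N hN
        rw [if_neg]
        rw [Nat.cast_le]
        simp only [Finset.mem_range] at hN
        omega
      rw [Finset.sum_congr rfl this]
      simp
    · rw [if_pos]
      rw [Nat.cast_le]
      simp only [Finset.mem_range, not_lt] at hN
      exact hN

lemma aux_map_R (P : Measure (ℕ → 𝒳)) [IsProbabilityMeasure P]
    (hind : iIndepFun (fun (n : ℕ) (ω : ℕ → 𝒳) => ω n) P)
    (θ : ℕ → Measure 𝒳) [∀ n, SigmaFinite (θ n)]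
    (hmarg : ∀ n : ℕ, 1 ≤ n → P.map (fun ω => ω n) = θ n) (k : ℕ) :
    P.map (fun (ω : ℕ → 𝒳) (i : Fin k) => ω ((i : ℕ) + 1)) =
      Measure.pi (fun i : Fin k => θ ((i : ℕ) + 1)) := by
  classical
  have hR : Measurable (fun (ω : ℕ → 𝒳) (i : Fin k) => ω ((i : ℕ) + 1)) :=
    measurable_pi_lambda _ fun i => measurable_pi_apply _
  refine (Measure.pi_eq fun s hs => ?_).symm
  rw [Measure.map_apply hR (MeasurableSet.univ_pi hs)]
  set sets : ℕ → Set 𝒳 := fun n => if h : n - 1 < k ∧ 1 ≤ n then s ⟨n - 1, h.1⟩ else Set.univ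
    with hsets
  have hSets : ∀ i : Fin k, sets ((i : ℕ) + 1) = s i := by
    intro i
    have h : (i : ℕ) + 1 - 1 < k ∧ 1 ≤ (i : ℕ) + 1 := ⟨by simpa using i.isLt, by omega⟩
    simp only [hsets, dif_pos h]
    congr
  set S : Finset ℕ := Finset.image (fun i : Fin k => (i : ℕ) + 1) Finset.univ with hS
  have hinj : ∀ a ∈ (Finset.univ : Finset (Fin k)), ∀ b ∈ (Finset.univ : Finset (Fin k)),
      (a : ℕ) + 1 = (b : ℕ) + 1 → a = b := by
    intro a _ b _ h
    exact Fin.ext (Nat.succ_injective h)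
  have hmeas : ∀ n, n ∈ S → MeasurableSet (sets n) := by
    intro n _
    simp only [hsets]
    split
    · exact hs _
    · exact MeasurableSet.univ
  have hkey := hind.measure_inter_preimage_eq_mul S hmeas
  have hpre : ((fun (ω : ℕ → 𝒳) (i : Fin k) => ω ((i : ℕ) + 1)) ⁻¹' Set.univ.pi s) =
      ⋂ n ∈ S, (fun ω : ℕ → 𝒳 => ω n) ⁻¹' sets n := by
    ext ω
    simp only [Set.mem_preimage, Set.mem_pi, Set.mem_univ, forall_true_left, Set.mem_iInter,
      hS, Finset.mem_image, Finset.mem_univ, true_and]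
    constructor
    · rintro h n ⟨i, rfl⟩
      rw [hSets i]
      exact h i
    · intro h i
      have := h ((i : ℕ) + 1) ⟨i, rfl⟩
      rwa [hSets i] at this
  rw [hpre]
  rw [hkey]
  rw [Finset.prod_image hinj]
  refine Finset.prod_congr rfl fun i _ => ?_
  rw [← Measure.map_apply (measurable_pi_apply ((i : ℕ) + 1)) (by rw [hSets i]; exact hs i),
    hmarg ((i : ℕ) + 1) (by omega), hSets i]

lemma aux_obsSigma {𝒳' : Type*} [m𝒳 : MeasurableSpace 𝒳'] (k : ℕ) :
    obsSigma 𝒳' k = MeasurableSpace.comap (fun (ω : ℕ → 𝒳') (i : Fin k) => ω ((i : ℕ) + 1))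
      MeasurableSpace.pi := by
  apply le_antisymm
  · refine iSup_le fun n => iSup_le fun hn => ?_
    rw [Finset.mem_Icc] at hn
    have hlt : n - 1 < k := by omega
    have hfun : (fun ω : ℕ → 𝒳' => ω n) =
        (fun x : Fin k → 𝒳' => x ⟨n - 1, hlt⟩) ∘
          (fun (ω : ℕ → 𝒳') (i : Fin k) => ω ((i : ℕ) + 1)) := by
      funext ω
      simp only [Function.comp_apply]
      congr 1
      omega
    rw [hfun, ← MeasurableSpace.comap_comp]
    exact MeasurableSpace.comap_mono ((measurable_pi_apply _).comap_le)
  · rw [← measurable_iff_comap_le]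
    refine @measurable_pi_lambda _ _ _ (obsSigma 𝒳' k) _ _ fun i => ?_
    rw [measurable_iff_comap_le]
    have hmem : (i : ℕ) + 1 ∈ Finset.Icc 1 k := by
      rw [Finset.mem_Icc]
      exact ⟨by omega, by omega⟩
    exact le_iSup₂ (f := fun n (_ : n ∈ Finset.Icc 1 k) =>
      MeasurableSpace.comap (fun ω : ℕ → 𝒳' => ω n) m𝒳) ((i : ℕ) + 1) hmem

end AuxLemmas

/-- Let `ν̲1 ≪ ν0` with `L* = log (dν̲1/dν0)` continuous on the support of
`ν0`, and let `ν1` be such that the `L*`-pushforward of `ν1` stochastically dominates that of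
`ν̲1`.  Let `τ_C*` be the CUSUM stopping time with statistic `L*` and threshold `η`.  Then for
every change point `λ ≥ 1` and every `N ≥ 0`, almost surely
`P_λ^{ν0,ν̲1}((τ_C* − λ + 1)⁺ ≤ N | 𝓕_{λ−1}) ≤ P_λ^{ν0,ν1}((τ_C* − λ + 1)⁺ ≤ N | 𝓕_{λ−1})`,
and consequently, almost surely
`E_λ^{ν0,ν̲1}[(τ_C* − λ + 1)⁺ | 𝓕_{λ−1}] ≥ E_λ^{ν0,ν1}[(τ_C* − λ + 1)⁺ | 𝓕_{λ−1}]`.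
Conditional probabilities and expectations are formalized by quantifying over all versions,
i.e. all `𝓕_{λ−1}`-measurable functions satisfying the defining partial-averaging property. -/
theorem stmt_9 {𝒳 : Type*} [MeasurableSpace 𝒳] [TopologicalSpace 𝒳]
    (ν0 ν1u ν1 : Measure 𝒳)
    [IsProbabilityMeasure ν0] [IsProbabilityMeasure ν1u] [IsProbabilityMeasure ν1]
    (habs : ν1u ≪ ν0)
    (hLcont : ContinuousOn (llr ν1u ν0) (measSupport ν0))
    (hdom : StochLarger (ν1.map (llr ν1u ν0)) (ν1u.map (llr ν1u ν0)))
    (η : ℝ) (lam : ℕ) (hlam : 1 ≤ lam)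
    -- `P₁ = P_λ^{ν0, ν̲1}` and `P₂ = P_λ^{ν0, ν1}` are the change-point product laws
    (P₁ P₂ : Measure (ℕ → 𝒳))
    [IsProbabilityMeasure P₁] [IsProbabilityMeasure P₂]
    (hP₁indep : iIndepFun (fun (n : ℕ) (ω : ℕ → 𝒳) => ω n) P₁)
    (hP₂indep : iIndepFun (fun (n : ℕ) (ω : ℕ → 𝒳) => ω n) P₂)
    (hP₁marg : ∀ n : ℕ, 1 ≤ n →
      P₁.map (fun ω => ω n) = if n < lam then ν0 else ν1u)
    (hP₂marg : ∀ n : ℕ, 1 ≤ n →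
      P₂.map (fun ω => ω n) = if n < lam then ν0 else ν1) :
    -- delay `(τ_C* − λ + 1)⁺` is `tauC (llr ν1u ν0) η ω + 1 - λ` in truncated `ℕ∞` arithmetic
    (∀ N : ℕ, ∀ g₁ g₂ : (ℕ → 𝒳) → ℝ≥0∞,
      Measurable[obsSigma 𝒳 (lam - 1)] g₁ → Measurable[obsSigma 𝒳 (lam - 1)] g₂ →
      (∀ A : Set (ℕ → 𝒳), MeasurableSet[obsSigma 𝒳 (lam - 1)] A →
        P₁ (A ∩ {ω | tauC (llr ν1u ν0) η ω + 1 - (lam : ℕ∞) ≤ (N : ℕ∞)})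
          = ∫⁻ ω in A, g₁ ω ∂P₁) →
      (∀ A : Set (ℕ → 𝒳), MeasurableSet[obsSigma 𝒳 (lam - 1)] A →
        P₂ (A ∩ {ω | tauC (llr ν1u ν0) η ω + 1 - (lam : ℕ∞) ≤ (N : ℕ∞)})
          = ∫⁻ ω in A, g₂ ω ∂P₂) →
      ∀ᵐ ω ∂P₁, g₁ ω ≤ g₂ ω) ∧
    (∀ e₁ e₂ : (ℕ → 𝒳) → ℝ≥0∞,
      Measurable[obsSigma 𝒳 (lam - 1)] e₁ → Measurable[obsSigma 𝒳 (lam - 1)] e₂ →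
      (∀ A : Set (ℕ → 𝒳), MeasurableSet[obsSigma 𝒳 (lam - 1)] A →
        ∫⁻ ω in A, ((tauC (llr ν1u ν0) η ω + 1 - (lam : ℕ∞) : ℕ∞) : ℝ≥0∞) ∂P₁
          = ∫⁻ ω in A, e₁ ω ∂P₁) →
      (∀ A : Set (ℕ → 𝒳), MeasurableSet[obsSigma 𝒳 (lam - 1)] A →
        ∫⁻ ω in A, ((tauC (llr ν1u ν0) η ω + 1 - (lam : ℕ∞) : ℕ∞) : ℝ≥0∞) ∂P₂
          = ∫⁻ ω in A, e₂ ω ∂P₂) →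
      ∀ᵐ ω ∂P₁, e₂ ω ≤ e₁ ω) := by
  
  classical
  have hXne : Nonempty 𝒳 := by
    by_contra h
    rw [not_nonempty_iff] at h
    have h1 : ν0 Set.univ = 1 := measure_univ
    rw [Set.univ_eq_empty_iff.mpr h] at h1
    simp at h1
  have hL : Measurable (llr ν1u ν0) := measurable_llr _ _
  set L : 𝒳 → ℝ := llr ν1u ν0 with hLdef
  have hRmeas : ∀ k : ℕ, Measurable (fun (ω : ℕ → 𝒳) (i : Fin k) => ω ((i : ℕ) + 1)) :=
    fun k => measurable_pi_lambda _ fun i => measurable_pi_apply _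
  have hle : (obsSigma 𝒳 (lam - 1)) ≤ (inferInstance : MeasurableSpace (ℕ → 𝒳)) := by
    rw [aux_obsSigma]
    exact (hRmeas _).comap_le
  -- the marginal families
  set θ₁ : ℕ → Measure 𝒳 := fun n => if n < lam then ν0 else ν1u with hθ₁
  set θ₂ : ℕ → Measure 𝒳 := fun n => if n < lam then ν0 else ν1 with hθ₂
  have hθ₁p : ∀ n, IsProbabilityMeasure (θ₁ n) := by
    intro n; rw [hθ₁]; dsimp only; split <;> infer_instance
  have hθ₂p : ∀ n, IsProbabilityMeasure (θ₂ n) := by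
    intro n; rw [hθ₂]; dsimp only; split <;> infer_instance
  haveI := hθ₁p; haveI := hθ₂p
  have hmap₁ : ∀ k : ℕ, P₁.map (fun (ω : ℕ → 𝒳) (i : Fin k) => ω ((i : ℕ) + 1)) =
      Measure.pi (fun i : Fin k => θ₁ ((i : ℕ) + 1)) :=
    fun k => aux_map_R P₁ hP₁indep θ₁ (fun n hn => (hP₁marg n hn).trans (by rw [hθ₁])) k
  have hmap₂ : ∀ k : ℕ, P₂.map (fun (ω : ℕ → 𝒳) (i : Fin k) => ω ((i : ℕ) + 1)) =
      Measure.pi (fun i : Fin k => θ₂ ((i : ℕ) + 1)) :=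
    fun k => aux_map_R P₂ hP₂indep θ₂ (fun n hn => (hP₂marg n hn).trans (by rw [hθ₂])) k
  -- the stopping events
  have hEext : ∀ N : ℕ, {ω : ℕ → 𝒳 | tauC L η ω + 1 - (lam : ℕ∞) ≤ (N : ℕ∞)} =
      ⋃ n ∈ Finset.Icc 1 (lam - 1 + N), {ω | η ≤ cusumS L ω n} := by
    intro N
    ext ω
    simp only [Set.mem_setOf_eq, Set.mem_iUnion, Finset.mem_Icc, exists_prop]
    rw [aux_tau_le_iff L η ω lam N hlam]
    constructor
    · rintro ⟨n, h1, h2, h3⟩; exact ⟨n, ⟨h1, h2⟩, h3⟩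
    · rintro ⟨n, ⟨h1, h2⟩, h3⟩; exact ⟨n, h1, h2, h3⟩
  have hE : ∀ N : ℕ, MeasurableSet {ω : ℕ → 𝒳 | tauC L η ω + 1 - (lam : ℕ∞) ≤ (N : ℕ∞)} := by
    intro N
    rw [hEext N]
    exact MeasurableSet.biUnion (Finset.countable_toSet _)
      fun n _ => measurableSet_le measurable_const (aux_cusum_meas L hL n)
  -- the key comparison
  have key : ∀ (N : ℕ) (A : Set (ℕ → 𝒳)), MeasurableSet[(obsSigma 𝒳 (lam - 1))] A →
      MeasurableSet A ∧ P₁ A = P₂ A ∧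
      P₁ (A ∩ {ω | tauC L η ω + 1 - (lam : ℕ∞) ≤ (N : ℕ∞)}) ≤
        P₂ (A ∩ {ω | tauC L η ω + 1 - (lam : ℕ∞) ≤ (N : ℕ∞)}) := by
    intro N A hA
    rw [aux_obsSigma, MeasurableSpace.measurableSet_comap] at hA
    obtain ⟨A', hA'm, rfl⟩ := hA
    set m := lam - 1 + N with hm
    set E := {ω : ℕ → 𝒳 | tauC L η ω + 1 - (lam : ℕ∞) ≤ (N : ℕ∞)} with hEdef
    set ext : (Fin m → 𝒳) → (ℕ → 𝒳) :=
      fun x n => if h : 1 ≤ n ∧ n ≤ m then x ⟨n - 1, by omega⟩ else Classical.arbitrary 𝒳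
      with hext
    have hextm : Measurable ext := by
      refine measurable_pi_lambda _ fun n => ?_
      rw [hext]; dsimp only
      split
      · exact measurable_pi_apply _
      · exact measurable_const
    set E' := ext ⁻¹' E with hE'
    have hE'm : MeasurableSet E' := hextm (hE N)
    have hEcoord : ∀ ω ω' : ℕ → 𝒳, (∀ i, 1 ≤ i → i ≤ m → ω i = ω' i) → (ω ∈ E ↔ ω' ∈ E) := by
      intro ω ω' h
      rw [hEdef]; simp only [Set.mem_setOf_eq]
      rw [aux_tau_le_iff L η ω lam N hlam, aux_tau_le_iff L η ω' lam N hlam]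
      constructor
      · rintro ⟨n, h1, h2, h3⟩
        refine ⟨n, h1, h2, ?_⟩
        rwa [← aux_cusum_congr L ω ω' n (fun i hi1 hi2 => h i hi1 (le_trans hi2 h2))]
      · rintro ⟨n, h1, h2, h3⟩
        refine ⟨n, h1, h2, ?_⟩
        rwa [aux_cusum_congr L ω ω' n (fun i hi1 hi2 => h i hi1 (le_trans hi2 h2))]
    have hRE : (fun (ω : ℕ → 𝒳) (i : Fin m) => ω ((i : ℕ) + 1)) ⁻¹' E' = E := by
      ext ω
      rw [hE']
      simp only [Set.mem_preimage]
      refine hEcoord _ ω fun i hi1 hi2 => ?_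
      rw [hext]; dsimp only
      rw [dif_pos ⟨hi1, hi2⟩]
      show ω ((i - 1) + 1) = ω i
      congr 1
      omega
    have hlm : lam - 1 ≤ m := by omega
    set proj : (Fin m → 𝒳) → (Fin (lam - 1) → 𝒳) :=
      fun x i => x ⟨i.1, lt_of_lt_of_le i.2 hlm⟩ with hproj
    have hprojm : Measurable proj := measurable_pi_lambda _ fun i => measurable_pi_apply _
    have hcomp : (fun (ω : ℕ → 𝒳) (i : Fin (lam - 1)) => ω ((i : ℕ) + 1)) =
        proj ∘ (fun (ω : ℕ → 𝒳) (i : Fin m) => ω ((i : ℕ) + 1)) := rfl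
    set B := proj ⁻¹' A' ∩ E' with hB
    have hBm : MeasurableSet B := (hprojm hA'm).inter hE'm
    have hfam : (fun i : Fin (lam - 1) => θ₁ ((i : ℕ) + 1)) =
        (fun i : Fin (lam - 1) => θ₂ ((i : ℕ) + 1)) := by
      funext i
      have hi : (i : ℕ) + 1 < lam := by have := i.isLt; omega
      rw [hθ₁, hθ₂]; dsimp only
      rw [if_pos hi, if_pos hi]
    refine ⟨hRmeas (lam - 1) hA'm, ?_, ?_⟩
    · rw [← Measure.map_apply (hRmeas _) hA'm, ← Measure.map_apply (hRmeas _) hA'm,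
        hmap₁ (lam - 1), hmap₂ (lam - 1), hfam]
    · have hsplit : (fun (ω : ℕ → 𝒳) (i : Fin (lam - 1)) => ω ((i : ℕ) + 1)) ⁻¹' A' ∩ E =
          (fun (ω : ℕ → 𝒳) (i : Fin m) => ω ((i : ℕ) + 1)) ⁻¹' B := by
        rw [hB, Set.preimage_inter, hRE, hcomp, Set.preimage_comp]
      rw [hsplit, ← Measure.map_apply (hRmeas m) hBm, ← Measure.map_apply (hRmeas m) hBm,
        hmap₁ m, hmap₂ m]
      set sfin : Finset (Fin m) := Finset.univ.filter (fun i : Fin m => lam ≤ (i : ℕ) + 1)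
        with hsfin
      refine aux_pi_le L hL hXne sfin _ _ (fun i => hθ₁p _) (fun i => hθ₂p _) ?_ ?_ B hBm ?_
      · intro i hi
        have hilt : (i : ℕ) + 1 < lam := by
          by_contra hc
          exact hi (by simp [hsfin, Finset.mem_filter]; omega)
        rw [hθ₁, hθ₂]; dsimp only
        rw [if_pos hilt, if_pos hilt]
      · intro i hi t
        have hige : lam ≤ (i : ℕ) + 1 := by
          rw [hsfin, Finset.mem_filter] at hi
          exact hi.2
        have h1 : θ₁ ((i : ℕ) + 1) = ν1u := by rw [hθ₁]; dsimp only; rw [if_neg (by omega)]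
        have h2 : θ₂ ((i : ℕ) + 1) = ν1 := by rw [hθ₂]; dsimp only; rw [if_neg (by omega)]
        rw [h1, h2]
        have := hdom t
        rwa [Measure.map_apply hL measurableSet_Ici, Measure.map_apply hL measurableSet_Ici]
          at this
      · intro x y hxy hLxy hx
        have hxyco : ∀ i : Fin m, (i : ℕ) + 1 < lam → x i = y i := by
          intro i hi
          exact hxy i (by simp [hsfin, Finset.mem_filter]; omega)
        constructor
        · have hproj_eq : proj x = proj y := by
            funext i
            have hfin : (i : ℕ) + 1 < lam := by have := i.isLt; omega
            exact hxyco ⟨i.1, lt_of_lt_of_le i.2 hlm⟩ hfin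
          have h1 := hx.1
          simp only [Set.mem_preimage] at h1 ⊢
          rwa [← hproj_eq]
        · have hx2 : ext x ∈ E := hx.2
          rw [hE']
          simp only [Set.mem_preimage]
          rw [hEdef] at hx2 ⊢
          simp only [Set.mem_setOf_eq] at hx2 ⊢
          rw [aux_tau_le_iff L η _ lam N hlam] at hx2 ⊢
          obtain ⟨n, h1, h2, h3⟩ := hx2
          refine ⟨n, h1, h2, le_trans h3 ?_⟩
          refine aux_cusum_mono L _ _ n fun i hi1 hi2 => ?_
          have him : i ≤ m := le_trans hi2 h2
          rw [hext]; dsimp only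
          rw [dif_pos ⟨hi1, him⟩, dif_pos ⟨hi1, him⟩]
          set j : Fin m := ⟨i - 1, by omega⟩ with hj
          by_cases hcase : lam ≤ (j : ℕ) + 1
          · exact hLxy j (by simp [hsfin, Finset.mem_filter, hcase])
          · rw [hxyco j (by omega)]
      -- done key
  have htrim : P₁.trim hle = P₂.trim hle := by
    refine @Measure.ext _ (obsSigma 𝒳 (lam - 1)) _ _ fun s hs => ?_
    rw [trim_measurableSet_eq hle hs, trim_measurableSet_eq hle hs]
    exact (key 0 s hs).2.1
  have hsetlint : ∀ (P : Measure (ℕ → 𝒳)) (f : (ℕ → 𝒳) → ℝ≥0∞), Measurable[(obsSigma 𝒳 (lam - 1))] f →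
      ∀ s : Set (ℕ → 𝒳), MeasurableSet[(obsSigma 𝒳 (lam - 1))] s →
      ∫⁻ ω in s, f ω ∂(P.trim hle) = ∫⁻ ω in s, f ω ∂P := by
    intro P f hf s hs
    rw [restrict_trim hle P hs, lintegral_trim hle hf]
  have main : ∀ u v : (ℕ → 𝒳) → ℝ≥0∞, Measurable[(obsSigma 𝒳 (lam - 1))] u → Measurable[(obsSigma 𝒳 (lam - 1))] v →
      (∀ A : Set (ℕ → 𝒳), MeasurableSet[(obsSigma 𝒳 (lam - 1))] A →
        ∫⁻ ω in A, u ω ∂P₁ ≤ ∫⁻ ω in A, v ω ∂P₁) → ∀ᵐ ω ∂P₁, u ω ≤ v ω := by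
    intro u v hu hv h
    haveI : IsFiniteMeasure (P₁.trim hle) := isFiniteMeasure_trim hle
    refine ae_le_of_ae_le_trim (hm := hle) ?_
    refine ae_le_of_forall_setLIntegral_le_of_sigmaFinite (μ := P₁.trim hle) hu ?_
    intro s hs _
    rw [hsetlint P₁ u hu s hs, hsetlint P₁ v hv s hs]
    exact h s hs
  constructor
  · intro N g₁ g₂ hg₁ hg₂ hpa₁ hpa₂
    refine main g₁ g₂ hg₁ hg₂ ?_
    intro A hA
    obtain ⟨hAm, hPA, hPle⟩ := key N A hA
    calc ∫⁻ ω in A, g₁ ω ∂P₁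
        = P₁ (A ∩ {ω | tauC L η ω + 1 - (lam : ℕ∞) ≤ (N : ℕ∞)}) := (hpa₁ A hA).symm
      _ ≤ P₂ (A ∩ {ω | tauC L η ω + 1 - (lam : ℕ∞) ≤ (N : ℕ∞)}) := hPle
      _ = ∫⁻ ω in A, g₂ ω ∂P₂ := hpa₂ A hA
      _ = ∫⁻ ω in A, g₂ ω ∂(P₂.trim hle) := (hsetlint P₂ g₂ hg₂ A hA).symm
      _ = ∫⁻ ω in A, g₂ ω ∂(P₁.trim hle) := by rw [htrim]
      _ = ∫⁻ ω in A, g₂ ω ∂P₁ := hsetlint P₁ g₂ hg₂ A hA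
  · intro e₁ e₂ he₁ he₂ hpa₁ hpa₂
    have hseries : ∀ P : Measure (ℕ → 𝒳), IsProbabilityMeasure P →
        ∀ A : Set (ℕ → 𝒳), MeasurableSet A →
        ∫⁻ ω in A, ((tauC L η ω + 1 - (lam : ℕ∞) : ℕ∞) : ℝ≥0∞) ∂P
          = ∑' N : ℕ, P (A \ (A ∩ {ω | tauC L η ω + 1 - (lam : ℕ∞) ≤ (N : ℕ∞)})) := by
      intro P hPinst A hAm
      haveI := hPinst
      have hpt : ∀ ω : ℕ → 𝒳, ((tauC L η ω + 1 - (lam : ℕ∞) : ℕ∞) : ℝ≥0∞)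
          = ∑' N : ℕ, Set.indicator
              {ω' : ℕ → 𝒳 | tauC L η ω' + 1 - (lam : ℕ∞) ≤ (N : ℕ∞)}ᶜ 1 ω := by
        intro ω
        rw [aux_enat_tsum]
        refine tsum_congr fun N => ?_
        rw [Set.indicator_apply]
        by_cases h : tauC L η ω + 1 - (lam : ℕ∞) ≤ (N : ℕ∞)
        · rw [if_pos h,
            if_neg (by simp only [Set.mem_compl_iff, Set.mem_setOf_eq, not_not]; exact h)]
        · rw [if_neg h,
            if_pos (by simp only [Set.mem_compl_iff, Set.mem_setOf_eq]; exact h)]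
          rfl
      rw [lintegral_congr hpt,
        lintegral_tsum fun N => (measurable_one.indicator (hE N).compl).aemeasurable]
      refine tsum_congr fun N => ?_
      rw [lintegral_indicator_one (hE N).compl, Measure.restrict_apply (hE N).compl]
      congr 1
      ext ω
      simp only [Set.mem_inter_iff, Set.mem_compl_iff, Set.mem_diff, Set.mem_setOf_eq]
      tauto
    refine main e₂ e₁ he₂ he₁ ?_
    intro A hA
    obtain ⟨hAm, hPA, _⟩ := key 0 A hA
    calc ∫⁻ ω in A, e₂ ω ∂P₁
        = ∫⁻ ω in A, e₂ ω ∂(P₁.trim hle) := (hsetlint P₁ e₂ he₂ A hA).symm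
      _ = ∫⁻ ω in A, e₂ ω ∂(P₂.trim hle) := by rw [htrim]
      _ = ∫⁻ ω in A, e₂ ω ∂P₂ := hsetlint P₂ e₂ he₂ A hA
      _ = ∫⁻ ω in A, ((tauC L η ω + 1 - (lam : ℕ∞) : ℕ∞) : ℝ≥0∞) ∂P₂ := (hpa₂ A hA).symm
      _ = ∑' N : ℕ, P₂ (A \ (A ∩ {ω | tauC L η ω + 1 - (lam : ℕ∞) ≤ (N : ℕ∞)})) :=
          hseries P₂ inferInstance A hAm
      _ ≤ ∑' N : ℕ, P₁ (A \ (A ∩ {ω | tauC L η ω + 1 - (lam : ℕ∞) ≤ (N : ℕ∞)})) := by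
          refine ENNReal.tsum_le_tsum fun N => ?_
          have h1 := (key N A hA).2.2
          have hsub : A ∩ {ω | tauC L η ω + 1 - (lam : ℕ∞) ≤ (N : ℕ∞)} ⊆ A :=
            Set.inter_subset_left
          rw [measure_diff hsub ((hAm.inter (hE N)).nullMeasurableSet) (measure_ne_top _ _),
            measure_diff hsub ((hAm.inter (hE N)).nullMeasurableSet) (measure_ne_top _ _)]
          exact tsub_le_tsub (le_of_eq hPA.symm) h1
      _ = ∫⁻ ω in A, ((tauC L η ω + 1 - (lam : ℕ∞) : ℕ∞) : ℝ≥0∞) ∂P₁ :=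
          (hseries P₁ inferInstance A hAm).symm
      _ = ∫⁻ ω in A, e₁ ω ∂P₁ := hpa₁ A hA
end

section
/- (Core estimate in the proof of Theorem 3.) Let (𝒳,𝓕) be a measurable space, ν0 and ν̲1 probability measures with ν̲1 ≪ ν0, L* = log(dν̲1/dν0) continuous on the support of ν0, and let ν1 be a probability measure such that the pushforward of ν1 under L* is stochastically larger than the pushforward of ν̲1 under L*. Let Λ have geometric prior π_k = ρ(1−ρ)^{k−1} and let τ_S* = inf{n ≥ 1 : log( Σ_{k=1}^n π_k exp( Σ_{i=k}^n L*(X_i) ) ) ≥ η} for a threshold η ∈ ℝ. Then E^{ν0,ν̲1}[(τ_S* − Λ)^+] ≥ E^{ν0,ν1}[(τ_S* − Λ)^+], i.e. the average detection delay of τ_S* is maximized over the post-change distribution at ν̲1. Moreover PFA^{ν0,ν1}(τ_S*) = PFA^{ν0,ν̲1}(τ_S*), since the probability of false alarm depends only on the pre-change distribution. -/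
open MeasureTheory ProbabilityTheory ENNReal

/-- `τ` is a stopping time with respect to the observation filtration `(𝓕_n)`. -/
def IsObsStoppingTime {𝒳 : Type*} [MeasurableSpace 𝒳] (τ : (ℕ → 𝒳) → ℕ∞) : Prop :=
  ∀ n : ℕ, MeasurableSet[obsSigma 𝒳 n] {ω | τ ω ≤ (n : ℕ∞)}

/-- `P` is the law `P_λ^{μ,γ}` of the observation sequence with change point `λ`:
the coordinates are independent, `X_n ∼ μ` for `n ≤ λ − 1` and `X_n ∼ γ` for `n ≥ λ`. -/
def IsChangePointLaw {𝒳 : Type*} [MeasurableSpace 𝒳] (lam : ℕ) (μ γ : Measure 𝒳)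
    (P : Measure (ℕ → 𝒳)) : Prop :=
  IsProbabilityMeasure P ∧
  iIndepFun (fun (n : ℕ) (ω : ℕ → 𝒳) => ω n) P ∧
  ∀ n : ℕ, 1 ≤ n → P.map (fun ω => ω n) = if n < lam then μ else γ

/-- `Q` is the Bayesian joint law of the change point `Λ` (first component, with geometric
prior `π_k = ρ (1−ρ)^{k−1}`) and of the observation sequence (second component), whose
conditional law given `Λ = λ` is the change-point law `Plaw λ = P_λ^{μ,γ}`. -/
def IsBayesLaw {𝒳 : Type*} [MeasurableSpace 𝒳] (ρ : ℝ) (μ γ : Measure 𝒳)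
    (Plaw : ℕ → Measure (ℕ → 𝒳)) (Q : Measure (ℕ × (ℕ → 𝒳))) : Prop :=
  IsProbabilityMeasure Q ∧
  (∀ lam : ℕ, 1 ≤ lam → IsChangePointLaw lam μ γ (Plaw lam)) ∧
  (∀ lam : ℕ, 1 ≤ lam → ∀ A : Set (ℕ → 𝒳), MeasurableSet A →
    Q ({lam} ×ˢ A) = ENNReal.ofReal (ρ * (1 - ρ) ^ (lam - 1)) * Plaw lam A)

/-- The Shiryaev statistic at time `n ≥ 1` for geometric prior with parameter `ρ`:
`log (∑_{k=1}^n ρ (1−ρ)^{k−1} exp (∑_{i=k}^n L(X_i)))`. -/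
noncomputable def shiryaevS {𝒳 : Type*} (ρ : ℝ) (L : 𝒳 → ℝ) (ω : ℕ → 𝒳) (n : ℕ) : ℝ :=
  Real.log (∑ k ∈ Finset.Icc 1 n,
    ρ * (1 - ρ) ^ (k - 1) * Real.exp (∑ i ∈ Finset.Icc k n, L (ω i)))

/-- The Shiryaev stopping time
`τ_S = inf {n ≥ 1 : log (∑_{k=1}^n π_k exp (∑_{i=k}^n L(X_i))) ≥ η}`. -/
noncomputable def tauS {𝒳 : Type*} (ρ : ℝ) (L : 𝒳 → ℝ) (η : ℝ) (ω : ℕ → 𝒳) : ℕ∞ :=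
  sInf {m : ℕ∞ | ∃ n : ℕ, m = n ∧ 1 ≤ n ∧ η ≤ shiryaevS ρ L ω n}

/-- The probability of false alarm `PFA(τ) = P(τ < Λ)` under the Bayesian joint law `Q`. -/
noncomputable def PFA {𝒳 : Type*} [MeasurableSpace 𝒳] (Q : Measure (ℕ × (ℕ → 𝒳)))
    (τ : (ℕ → 𝒳) → ℕ∞) : ℝ≥0∞ :=
  Q {p | τ p.2 < (p.1 : ℕ∞)}

/-- The average detection delay `ADD(τ) = E[(τ − Λ)⁺]` under the Bayesian joint law `Q`
(`(τ − Λ)⁺` is truncated `ℕ∞` subtraction). -/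
noncomputable def ADD {𝒳 : Type*} [MeasurableSpace 𝒳] (Q : Measure (ℕ × (ℕ → 𝒳)))
    (τ : (ℕ → 𝒳) → ℕ∞) : ℝ≥0∞ :=
  ∫⁻ p, ((τ p.2 - (p.1 : ℕ∞) : ℕ∞) : ℝ≥0∞) ∂Q

-- 1-dim lemma
lemma stoch_of_lower {μ₁ μ₂ : Measure ℝ} [IsProbabilityMeasure μ₁] [IsProbabilityMeasure μ₂]
    (h : ∀ t, μ₁ (Set.Ici t) ≤ μ₂ (Set.Ici t)) {C : Set ℝ} (hC : IsLowerSet C) :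
    μ₂ C ≤ μ₁ C := by
  have hIoi : ∀ t, μ₁ (Set.Ioi t) ≤ μ₂ (Set.Ioi t) := by
    intro t
    have hU : ∀ (μ : Measure ℝ), μ (Set.Ioi t) = ⨆ n : ℕ, μ (Set.Ici (t + (n+1:ℝ)⁻¹)) := by
      intro μ
      have hset : Set.Ioi t = ⋃ n : ℕ, Set.Ici (t + (n+1:ℝ)⁻¹) := by
        ext x
        simp only [Set.mem_Ioi, Set.mem_iUnion, Set.mem_Ici]
        constructor
        · intro hx
          obtain ⟨n, hn⟩ := exists_nat_one_div_lt (sub_pos.mpr hx)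
          exact ⟨n, by rw [one_div] at hn; linarith⟩
        · rintro ⟨n, hn⟩
          have : (0:ℝ) < (n+1:ℝ)⁻¹ := by positivity
          linarith
      rw [hset]
      refine Directed.measure_iUnion (Monotone.directed_le ?_)
      intro a b hab
      apply Set.Ici_subset_Ici.mpr
      have : (b+1:ℝ)⁻¹ ≤ (a+1:ℝ)⁻¹ := by
        apply inv_anti₀ (by positivity)
        have : (a:ℝ) ≤ b := Nat.cast_le.mpr hab
        linarith
      linarith
    rw [hU μ₁, hU μ₂]
    exact iSup_mono fun n => h _
  -- classify C
  rcases Set.eq_empty_or_nonempty C with hem | hne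
  · simp [hem]
  rcases eq_or_ne C Set.univ with huniv | hproper
  · simp [huniv]
  obtain ⟨a, ha⟩ : ∃ a, a ∉ C := by
    by_contra hcon
    push_neg at hcon
    exact hproper (Set.eq_univ_of_forall hcon)
  have hbdd : BddAbove C := by
    refine ⟨a, fun c hc => ?_⟩
    by_contra hca
    exact ha (hC (le_of_not_ge hca) hc)
  set t := sSup C with ht
  have hsub1 : Set.Iio t ⊆ C := by
    intro x hx
    obtain ⟨c, hcC, hxc⟩ := exists_lt_of_lt_csSup hne hx
    exact hC hxc.le hcC
  have hsub2 : C ⊆ Set.Iic t := fun c hc => le_csSup hbdd hc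
  by_cases htC : t ∈ C
  · have hCeq : C = Set.Iic t := by
      apply Set.Subset.antisymm hsub2
      intro x hx
      exact hC hx htC
    rw [hCeq]
    have e1 : ∀ (μ : Measure ℝ) [IsProbabilityMeasure μ], μ (Set.Iic t) = 1 - μ (Set.Ioi t) := by
      intro μ _
      rw [← Set.compl_Ioi, measure_compl measurableSet_Ioi (measure_ne_top μ _), measure_univ]
    rw [e1 μ₁, e1 μ₂]
    exact tsub_le_tsub_left (hIoi t) 1
  · have hCeq : C = Set.Iio t := by
      apply Set.Subset.antisymm _ hsub1
      intro x hx
      have hxt : x ≤ t := hsub2 hx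
      rcases eq_or_lt_of_le hxt with h | h
      · exact absurd (h ▸ hx) htC
      · exact h
    rw [hCeq]
    have e1 : ∀ (μ : Measure ℝ) [IsProbabilityMeasure μ], μ (Set.Iio t) = 1 - μ (Set.Ici t) := by
      intro μ _
      rw [← Set.compl_Ici, measure_compl measurableSet_Ici (measure_ne_top μ _), measure_univ]
    rw [e1 μ₁, e1 μ₂]
    exact tsub_le_tsub_left (h t) 1

lemma cons_le_cons_right {n : ℕ} (x : ℝ) {y y' : Fin n → ℝ} (h : y ≤ y') :
    (Fin.cons x y : Fin (n+1) → ℝ) ≤ Fin.cons x y' :=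
  Fin.cons_le_cons.mpr ⟨le_rfl, h⟩

lemma cons_le_cons_left {n : ℕ} {x x' : ℝ} (y : Fin n → ℝ) (h : x ≤ x') :
    (Fin.cons x y : Fin (n+1) → ℝ) ≤ Fin.cons x' y :=
  Fin.cons_le_cons.mpr ⟨h, le_rfl⟩

lemma pi_of_lower : ∀ (n : ℕ) (κ₁ κ₂ : Fin n → Measure ℝ),
    (∀ i, IsProbabilityMeasure (κ₁ i)) → (∀ i, IsProbabilityMeasure (κ₂ i)) →
    (∀ i t, κ₁ i (Set.Ici t) ≤ κ₂ i (Set.Ici t)) →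
    ∀ C : Set (Fin n → ℝ), IsLowerSet C → MeasurableSet C →
    Measure.pi κ₂ C ≤ Measure.pi κ₁ C := by
  intro n
  induction n with
  | zero =>
    intro κ₁ κ₂ h1 h2 hdom C hC hCm
    haveI := h1; haveI := h2
    rcases Set.eq_empty_or_nonempty C with hem | hne
    · simp [hem]
    · have : C = Set.univ := hne.eq_univ
      rw [this]
      simp
  | succ n IH =>
    intro κ₁ κ₂ h1 h2 hdom C hC hCm
    haveI := h1; haveI := h2
    haveI : ∀ i, IsProbabilityMeasure ((κ₁ ∘ Fin.succ) i) := fun i => h1 _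
    haveI : ∀ i, IsProbabilityMeasure ((κ₂ ∘ Fin.succ) i) := fun i => h2 _
    set e := MeasurableEquiv.piFinSuccAbove (fun _ : Fin (n+1) => ℝ) 0 with he
    have hmp1 := measurePreserving_piFinSuccAbove κ₁ 0
    have hmp2 := measurePreserving_piFinSuccAbove κ₂ 0
    set C' : Set (ℝ × (Fin n → ℝ)) := e.symm ⁻¹' C with hC'
    have hC'm : MeasurableSet C' := e.symm.measurable hCm
    have hmem : ∀ (x : ℝ) (y : Fin n → ℝ), ((x, y) ∈ C') ↔ Fin.cons x y ∈ C := by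
      intro x y
      simp only [hC', Set.mem_preimage, he]
      have : e.symm (x, y) = Fin.insertNth 0 x y := by
        simp [he, MeasurableEquiv.piFinSuccAbove, Fin.insertNthEquiv]
      rw [this, Fin.insertNth_zero']
    have key1 : Measure.pi κ₂ C = ((κ₂ 0).prod (Measure.pi fun j => κ₂ (Fin.succAbove 0 j))) C' := by
      rw [← hmp2.map_eq, Measure.map_apply e.measurable (e.symm.measurable hCm)]
      congr 1
      ext ω
      simp [hC', MeasurableEquiv.symm_apply_apply]
    have key2 : Measure.pi κ₁ C = ((κ₁ 0).prod (Measure.pi fun j => κ₁ (Fin.succAbove 0 j))) C' := by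
      rw [← hmp1.map_eq, Measure.map_apply e.measurable (e.symm.measurable hCm)]
      congr 1
      ext ω
      simp [hC', MeasurableEquiv.symm_apply_apply]
    rw [key1, key2]
    haveI : IsProbabilityMeasure (Measure.pi fun j => κ₁ (Fin.succAbove 0 j)) := by infer_instance
    haveI : IsProbabilityMeasure (Measure.pi fun j => κ₂ (Fin.succAbove 0 j)) := by infer_instance
    rw [Measure.prod_apply hC'm, Measure.prod_apply_symm hC'm]
    -- first comparison: tail measures
    have step1 : ∫⁻ x, (Measure.pi fun j => κ₂ (Fin.succAbove 0 j)) (Prod.mk x ⁻¹' C') ∂(κ₂ 0)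
        ≤ ∫⁻ x, (Measure.pi fun j => κ₁ (Fin.succAbove 0 j)) (Prod.mk x ⁻¹' C') ∂(κ₂ 0) := by
      apply lintegral_mono
      intro x
      dsimp only
      have hsec : Prod.mk x ⁻¹' C' = (fun y : Fin n → ℝ => Fin.cons x y) ⁻¹' C := by
        ext y; simp [hmem x y]
      rw [hsec]
      refine IH _ _ (fun i => h1 _) (fun i => h2 _) (fun i t => hdom _ t) _ ?_ ?_
      · intro v w hvw hv
        exact hC (cons_le_cons_right x hvw) hv
      · refine MeasurableSet.preimage hCm ?_
        apply measurable_pi_iff.mpr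
        intro i
        induction i using Fin.cases with
        | zero => simp [Fin.cons]
        | succ j => simpa using measurable_pi_apply j
    have mid : ∫⁻ x, (Measure.pi fun j => κ₁ (Fin.succAbove 0 j)) (Prod.mk x ⁻¹' C') ∂(κ₂ 0)
        = ∫⁻ y, (κ₂ 0) ((fun x => (x, y)) ⁻¹' C') ∂(Measure.pi fun j => κ₁ (Fin.succAbove 0 j)) := by
      rw [← Measure.prod_apply hC'm, Measure.prod_apply_symm hC'm]
    have step2 : ∫⁻ y, (κ₂ 0) ((fun x => (x, y)) ⁻¹' C') ∂(Measure.pi fun j => κ₁ (Fin.succAbove 0 j))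
        ≤ ∫⁻ y, (κ₁ 0) ((fun x => (x, y)) ⁻¹' C') ∂(Measure.pi fun j => κ₁ (Fin.succAbove 0 j)) := by
      apply lintegral_mono
      intro y
      dsimp only
      apply stoch_of_lower (fun t => hdom 0 t)
      intro a b hba ha
      rw [Set.mem_preimage] at ha ⊢
      rw [hmem] at ha ⊢
      exact hC (cons_le_cons_left y hba) ha
    calc ∫⁻ x, (Measure.pi fun j => κ₂ (Fin.succAbove 0 j)) (Prod.mk x ⁻¹' C') ∂(κ₂ 0)
        ≤ ∫⁻ x, (Measure.pi fun j => κ₁ (Fin.succAbove 0 j)) (Prod.mk x ⁻¹' C') ∂(κ₂ 0) := step1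
      _ = ∫⁻ y, (κ₂ 0) ((fun x => (x, y)) ⁻¹' C') ∂(Measure.pi fun j => κ₁ (Fin.succAbove 0 j)) := mid
      _ ≤ ∫⁻ y, (κ₁ 0) ((fun x => (x, y)) ⁻¹' C') ∂(Measure.pi fun j => κ₁ (Fin.succAbove 0 j)) := step2


def extFin {m : ℕ} (v : Fin m → ℝ) : ℕ → ℝ :=
  fun j => if h : j - 1 < m then v ⟨j - 1, h⟩ else 0

def Cset (ρ η : ℝ) (m : ℕ) : Set (Fin m → ℝ) :=
  {v | ∀ k, 1 ≤ k → k ≤ m → shiryaevS ρ (id : ℝ → ℝ) (extFin v) k < η}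

lemma tau_lt_iff {𝒳 : Type*} (ρ : ℝ) (L : 𝒳 → ℝ) (η : ℝ) (ω : ℕ → 𝒳) (m : ℕ) :
    (m : ℕ∞) < tauS ρ L η ω ↔ ∀ k, 1 ≤ k → k ≤ m → shiryaevS ρ L ω k < η := by
  constructor
  · intro h k hk1 hkm
    by_contra hcon
    push_neg at hcon
    have hmem : (k : ℕ∞) ∈ {m : ℕ∞ | ∃ n : ℕ, m = n ∧ 1 ≤ n ∧ η ≤ shiryaevS ρ L ω n} :=
      ⟨k, rfl, hk1, hcon⟩
    have := sInf_le hmem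
    have h2 : (m : ℕ∞) < (k : ℕ∞) := lt_of_lt_of_le h this
    exact absurd (Nat.cast_lt.mp h2) (by omega)
  · intro h
    have : ((m + 1 : ℕ) : ℕ∞) ≤ tauS ρ L η ω := by
      apply le_sInf
      rintro b ⟨n, rfl, hn1, hηn⟩
      have : ¬ (n ≤ m) := fun hnm => absurd (h n hn1 hnm) (not_lt.mpr hηn)
      exact_mod_cast Nat.cast_le.mpr (by omega : m + 1 ≤ n)
    exact lt_of_lt_of_le (by exact_mod_cast Nat.lt_succ_self m) this

lemma shiryaev_congr {𝒳 : Type*} (ρ : ℝ) (L : 𝒳 → ℝ) (ω : ℕ → 𝒳) {k m : ℕ} (hkm : k ≤ m) :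
    shiryaevS ρ (id : ℝ → ℝ) (extFin (fun i : Fin m => L (ω ((i : ℕ) + 1)))) k
      = shiryaevS ρ L ω k := by
  unfold shiryaevS
  congr 1
  apply Finset.sum_congr rfl
  intro j hj
  rw [Finset.mem_Icc] at hj
  congr 1
  congr 1
  apply Finset.sum_congr rfl
  intro i hi
  rw [Finset.mem_Icc] at hi
  have h1 : i - 1 < m := by omega
  simp only [extFin, id, dif_pos h1]
  congr 2
  omega

lemma event_eq {𝒳 : Type*} (ρ : ℝ) (L : 𝒳 → ℝ) (η : ℝ) (m : ℕ) :
    {ω : ℕ → 𝒳 | (m : ℕ∞) < tauS ρ L η ω}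
      = (fun ω (i : Fin m) => L (ω ((i : ℕ) + 1))) ⁻¹' Cset ρ η m := by
  ext ω
  simp only [Set.mem_setOf_eq, Set.mem_preimage, Cset, tau_lt_iff]
  constructor
  · intro h k hk1 hkm
    rw [shiryaev_congr ρ L ω hkm]
    exact h k hk1 hkm
  · intro h k hk1 hkm
    rw [← shiryaev_congr ρ L ω hkm]
    exact h k hk1 hkm

lemma shiryaev_mono {ρ : ℝ} (hρ : ρ ∈ Set.Ioo (0:ℝ) 1) {x y : ℕ → ℝ} (hxy : x ≤ y) {k : ℕ}
    (hk : 1 ≤ k) : shiryaevS ρ (id : ℝ → ℝ) x k ≤ shiryaevS ρ (id : ℝ → ℝ) y k := by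
  obtain ⟨hρ0, hρ1⟩ := hρ
  unfold shiryaevS
  apply Real.log_le_log
  · apply Finset.sum_pos
    · intro j hj
      have : (0:ℝ) < 1 - ρ := by linarith
      positivity
    · exact ⟨1, Finset.mem_Icc.mpr ⟨le_refl 1, hk⟩⟩
  · apply Finset.sum_le_sum
    intro j hj
    have h1ρ : (0:ℝ) < 1 - ρ := by linarith
    apply mul_le_mul_of_nonneg_left _ (by positivity)
    apply Real.exp_le_exp.mpr
    exact Finset.sum_le_sum fun i _ => hxy i

lemma Cset_lower {ρ : ℝ} (hρ : ρ ∈ Set.Ioo (0:ℝ) 1) (η : ℝ) (m : ℕ) :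
    IsLowerSet (Cset ρ η m) := by
  intro v w hwv hv k hk1 hkm
  refine lt_of_le_of_lt (shiryaev_mono hρ ?_ hk1) (hv k hk1 hkm)
  intro j
  unfold extFin
  split
  · exact hwv _
  · exact le_refl _

lemma Cset_measurable (ρ η : ℝ) (m : ℕ) : MeasurableSet (Cset ρ η m) := by
  have : Cset ρ η m = ⋂ (k : ℕ), ⋂ (_ : 1 ≤ k), ⋂ (_ : k ≤ m),
      {v : Fin m → ℝ | shiryaevS ρ (id : ℝ → ℝ) (extFin v) k < η} := by
    ext v; simp [Cset]
  rw [this]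
  refine MeasurableSet.iInter fun k => MeasurableSet.iInter fun _ => MeasurableSet.iInter fun _ => ?_
  have hmeas : Measurable fun v : Fin m → ℝ => shiryaevS ρ (id : ℝ → ℝ) (extFin v) k := by
    unfold shiryaevS
    apply Real.measurable_log.comp
    apply Finset.measurable_sum
    intro j _
    apply Measurable.const_mul
    apply Real.measurable_exp.comp
    apply Finset.measurable_sum
    intro i _
    simp only [extFin, id]
    split
    · exact measurable_pi_apply _
    · exact measurable_const
  exact measurableSet_lt hmeas measurable_const


lemma map_W {𝒳 : Type*} [MeasurableSpace 𝒳] {lam : ℕ} {μ γ : Measure 𝒳}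
    [IsProbabilityMeasure μ] [IsProbabilityMeasure γ]
    {P : Measure (ℕ → 𝒳)} (hP : IsChangePointLaw lam μ γ P)
    {L : 𝒳 → ℝ} (hL : Measurable L) (m : ℕ) :
    P.map (fun ω (i : Fin m) => L (ω ((i : ℕ) + 1)))
      = Measure.pi (fun i : Fin m => Measure.map L (if (i : ℕ) + 1 < lam then μ else γ)) := by
  obtain ⟨hprob, hind, hmarg⟩ := hP
  haveI := hprob
  haveI : ∀ i : Fin m, IsProbabilityMeasure (Measure.map L (if (i : ℕ) + 1 < lam then μ else γ)) := by
    intro i; split_ifs <;> exact Measure.isProbabilityMeasure_map hL.aemeasurable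
  refine (Measure.pi_eq fun s hs => ?_).symm
  have hW : Measurable (fun ω : ℕ → 𝒳 => fun i : Fin m => L (ω ((i : ℕ) + 1))) :=
    measurable_pi_iff.mpr fun i => hL.comp (measurable_pi_apply _)
  rw [Measure.map_apply hW (MeasurableSet.univ_pi hs)]
  classical
  set sets : ℕ → Set ℝ := fun j => if h : 1 ≤ j ∧ j ≤ m then s ⟨j - 1, by omega⟩ else Set.univ
    with hsets
  have hsets_m : ∀ j, MeasurableSet (sets j) := by
    intro j; rw [hsets]; dsimp only; split
    · exact hs _
    · exact MeasurableSet.univ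
  have hindL : iIndepFun
      (fun n (ω : ℕ → 𝒳) => L (ω n)) P := hind.comp (fun _ => L) (fun _ => hL)
  have hkey := hindL.measure_inter_preimage_eq_mul
      (Finset.image (fun i : Fin m => (i : ℕ) + 1) Finset.univ) (sets := sets)
      (fun j _ => hsets_m j)
  have hsets_eq : ∀ i : Fin m, sets ((i : ℕ) + 1) = s i := by
    intro i
    rw [hsets]; dsimp only
    rw [dif_pos ⟨by omega, by omega⟩]
    congr 1
  have hpre : (fun ω : ℕ → 𝒳 => fun i : Fin m => L (ω ((i : ℕ) + 1))) ⁻¹' Set.pi Set.univ s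
      = ⋂ j ∈ Finset.image (fun i : Fin m => (i : ℕ) + 1) Finset.univ,
          (fun ω : ℕ → 𝒳 => L (ω j)) ⁻¹' sets j := by
    ext ω
    simp only [Set.mem_preimage, Set.mem_pi, Set.mem_univ, forall_true_left, Set.mem_iInter,
      Finset.mem_image, Finset.mem_univ, true_and]
    constructor
    · rintro h j ⟨i, rfl⟩
      rw [hsets_eq i]; exact h i
    · intro h i
      have := h ((i : ℕ) + 1) ⟨i, rfl⟩
      rwa [hsets_eq i] at this
  rw [hpre, hkey, Finset.prod_image (fun a _ b _ hab => Fin.ext (by omega : (a:ℕ) = b))]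
  apply Finset.prod_congr rfl
  intro i _
  rw [hsets_eq i]
  have h1 : (fun ω : ℕ → 𝒳 => L (ω ((i : ℕ) + 1))) ⁻¹' s i
      = (fun ω : ℕ → 𝒳 => ω ((i : ℕ) + 1)) ⁻¹' (L ⁻¹' s i) := rfl
  rw [h1, ← Measure.map_apply (measurable_pi_apply _) (hL (hs i)),
    hmarg ((i : ℕ) + 1) (by omega), ← Measure.map_apply hL (hs i)]

lemma event_measurable {𝒳 : Type*} [MeasurableSpace 𝒳] {L : 𝒳 → ℝ} (hL : Measurable L)
    (ρ η : ℝ) (m : ℕ) : MeasurableSet {ω : ℕ → 𝒳 | (m : ℕ∞) < tauS ρ L η ω} := by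
  rw [event_eq]
  exact MeasurableSet.preimage (Cset_measurable ρ η m)
    (measurable_pi_iff.mpr fun i => hL.comp (measurable_pi_apply _))

lemma event_compare {𝒳 : Type*} [MeasurableSpace 𝒳] {lam : ℕ}
    {ν0 γ₁ γ₂ : Measure 𝒳} [IsProbabilityMeasure ν0] [IsProbabilityMeasure γ₁]
    [IsProbabilityMeasure γ₂]
    {P₁ P₂ : Measure (ℕ → 𝒳)} (h1 : IsChangePointLaw lam ν0 γ₁ P₁)
    (h2 : IsChangePointLaw lam ν0 γ₂ P₂)
    {L : 𝒳 → ℝ} (hL : Measurable L)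
    (hdom : ∀ t, (γ₁.map L) (Set.Ici t) ≤ (γ₂.map L) (Set.Ici t))
    {ρ : ℝ} (hρ : ρ ∈ Set.Ioo (0:ℝ) 1) (η : ℝ) (m : ℕ) :
    P₂ {ω | (m : ℕ∞) < tauS ρ L η ω} ≤ P₁ {ω | (m : ℕ∞) < tauS ρ L η ω} := by
  have hW : Measurable (fun ω : ℕ → 𝒳 => fun i : Fin m => L (ω ((i : ℕ) + 1))) :=
    measurable_pi_iff.mpr fun i => hL.comp (measurable_pi_apply _)
  rw [event_eq, ← Measure.map_apply hW (Cset_measurable ρ η m),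
    ← Measure.map_apply hW (Cset_measurable ρ η m), map_W h1 hL m, map_W h2 hL m]
  refine pi_of_lower m _ _ ?_ ?_ ?_ _ (Cset_lower hρ η m) (Cset_measurable ρ η m)
  · intro i; split_ifs <;> exact Measure.isProbabilityMeasure_map hL.aemeasurable
  · intro i; split_ifs <;> exact Measure.isProbabilityMeasure_map hL.aemeasurable
  · intro i t
    split_ifs
    · exact le_refl _
    · exact hdom t

lemma event_same {𝒳 : Type*} [MeasurableSpace 𝒳] {lam : ℕ}
    {ν0 γ₁ γ₂ : Measure 𝒳} [IsProbabilityMeasure ν0] [IsProbabilityMeasure γ₁]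
    [IsProbabilityMeasure γ₂]
    {P₁ P₂ : Measure (ℕ → 𝒳)} (h1 : IsChangePointLaw lam ν0 γ₁ P₁)
    (h2 : IsChangePointLaw lam ν0 γ₂ P₂)
    {L : 𝒳 → ℝ} (hL : Measurable L)
    (ρ η : ℝ) {m : ℕ} (hm : m < lam) :
    P₂ {ω | (m : ℕ∞) < tauS ρ L η ω} = P₁ {ω | (m : ℕ∞) < tauS ρ L η ω} := by
  have hW : Measurable (fun ω : ℕ → 𝒳 => fun i : Fin m => L (ω ((i : ℕ) + 1))) :=
    measurable_pi_iff.mpr fun i => hL.comp (measurable_pi_apply _)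
  rw [event_eq, ← Measure.map_apply hW (Cset_measurable ρ η m),
    ← Measure.map_apply hW (Cset_measurable ρ η m), map_W h1 hL m, map_W h2 hL m]
  have : ∀ (γ : Measure 𝒳), (fun i : Fin m => Measure.map L (if (i : ℕ) + 1 < lam then ν0 else γ))
      = fun i : Fin m => Measure.map L ν0 := by
    intro γ
    funext i
    rw [if_pos (by omega : (i : ℕ) + 1 < lam)]
  rw [this γ₁, this γ₂]

lemma tsum_indicator_sub (a : ℕ∞) (b : ℕ) :
    ((a - (b : ℕ∞) : ℕ∞) : ℝ≥0∞) = ∑' n : ℕ, (if ((b + n : ℕ) : ℕ∞) < a then (1:ℝ≥0∞) else 0) := by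
  cases a with
  | top =>
    have h1 : ∀ n : ℕ, (((b + n : ℕ) : ℕ∞) < (⊤ : ℕ∞)) := fun n => WithTop.coe_lt_top _
    simp only [if_pos (h1 _)]
    rw [tsum_const_eq_top_of_ne_zero one_ne_zero]
    simp [ENat.toENNReal_top]
  | coe A =>
    have h1 : ∀ n : ℕ, (((b + n : ℕ) : ℕ∞) < ((A : ℕ) : ℕ∞)) ↔ n < A - b := by
      intro n
      rw [Nat.cast_lt]
      omega
    have h2 : ((A : ℕ∞) - (b : ℕ∞) : ℕ∞) = ((A - b : ℕ) : ℕ∞) := by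
      exact (ENat.coe_sub A b).symm
    rw [h2, ENat.toENNReal_coe]
    have h3 : (fun n : ℕ => (if ((b + n : ℕ) : ℕ∞) < ((A:ℕ) : ℕ∞) then (1:ℝ≥0∞) else 0))
        = fun n => if n ∈ Finset.range (A - b) then (1:ℝ≥0∞) else 0 := by
      funext n
      simp only [Finset.mem_range]
      by_cases hn : n < A - b
      · rw [if_pos ((h1 n).mpr hn), if_pos hn]
      · rw [if_neg (fun hc => hn ((h1 n).mp hc)), if_neg hn]
    rw [h3, tsum_eq_sum (f := fun n => if n ∈ Finset.range (A - b) then (1:ℝ≥0∞) else 0)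
      (s := Finset.range (A - b)) (fun n hn => if_neg hn)]
    rw [Finset.sum_ite_mem, Finset.inter_self]
    simp

lemma ADD_decomp {𝒳 : Type*} [MeasurableSpace 𝒳] (Q : Measure (ℕ × (ℕ → 𝒳)))
    (τ : (ℕ → 𝒳) → ℕ∞) (hE : ∀ m : ℕ, MeasurableSet {ω | (m : ℕ∞) < τ ω}) :
    ∫⁻ p, ((τ p.2 - (p.1 : ℕ∞) : ℕ∞) : ℝ≥0∞) ∂Q
      = ∑' (l : ℕ), ∑' (n : ℕ), Q ({l} ×ˢ {ω | ((l + n : ℕ) : ℕ∞) < τ ω}) := by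
  have hSm : ∀ l n : ℕ, MeasurableSet (({l} : Set ℕ) ×ˢ {ω | ((l + n : ℕ) : ℕ∞) < τ ω}) :=
    fun l n => (measurableSet_singleton l).prod (hE (l + n))
  have hptwise : ∀ p : ℕ × (ℕ → 𝒳), ((τ p.2 - (p.1 : ℕ∞) : ℕ∞) : ℝ≥0∞)
      = ∑' (l : ℕ), ∑' (n : ℕ),
          Set.indicator (({l} : Set ℕ) ×ˢ {ω | ((l + n : ℕ) : ℕ∞) < τ ω})
            (fun _ => (1:ℝ≥0∞)) p := by
    rintro ⟨b, ω⟩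
    rw [tsum_eq_single b ?_]
    · rw [tsum_indicator_sub (τ ω) b]
      apply tsum_congr
      intro n
      by_cases h : ((b + n : ℕ) : ℕ∞) < τ ω
      · rw [if_pos h, Set.indicator_of_mem]
        exact ⟨rfl, h⟩
      · rw [if_neg h, Set.indicator_of_notMem]
        rintro ⟨-, hc⟩
        exact h hc
    · intro l hlb
      rw [ENNReal.tsum_eq_zero]
      intro n
      apply Set.indicator_of_notMem
      rintro ⟨hc, -⟩
      exact hlb (by simpa using hc.symm)
  rw [lintegral_congr hptwise]
  rw [lintegral_tsum (fun l => (Measurable.ennreal_tsum fun n =>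
    (measurable_const.indicator (hSm l n))).aemeasurable)]
  apply tsum_congr
  intro l
  rw [lintegral_tsum (fun n => (measurable_const.indicator (hSm l n)).aemeasurable)]
  apply tsum_congr
  intro n
  rw [lintegral_indicator (hSm l n), setLIntegral_one]

lemma PFA_decomp {𝒳 : Type*} [MeasurableSpace 𝒳] (Q : Measure (ℕ × (ℕ → 𝒳)))
    (τ : (ℕ → 𝒳) → ℕ∞) (hE : ∀ l : ℕ, MeasurableSet {ω | τ ω < (l : ℕ∞)}) :
    Q {p | τ p.2 < (p.1 : ℕ∞)} = ∑' (l : ℕ), Q ({l} ×ˢ {ω | τ ω < (l : ℕ∞)}) := by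
  have hset : {p : ℕ × (ℕ → 𝒳) | τ p.2 < (p.1 : ℕ∞)}
      = ⋃ l : ℕ, ({l} : Set ℕ) ×ˢ {ω | τ ω < (l : ℕ∞)} := by
    ext ⟨b, ω⟩
    simp only [Set.mem_setOf_eq, Set.mem_iUnion, Set.mem_prod, Set.mem_singleton_iff]
    constructor
    · intro h; exact ⟨b, rfl, h⟩
    · rintro ⟨l, rfl, h⟩; exact h
  rw [hset]
  apply measure_iUnion
  · intro a b hab
    simp only [Function.onFun, Set.disjoint_left]
    rintro ⟨c, ω⟩ ⟨hc1, -⟩ ⟨hc2, -⟩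
    simp only [Set.mem_singleton_iff] at hc1 hc2
    exact hab (hc1 ▸ hc2)
  · exact fun l => (measurableSet_singleton l).prod (hE l)

lemma geom_sum {ρ : ℝ} (hρ : ρ ∈ Set.Ioo (0:ℝ) 1) :
    ∑' (l : ℕ), ENNReal.ofReal (ρ * (1 - ρ) ^ l) = 1 := by
  obtain ⟨h0, h1⟩ := hρ
  have hr : (0:ℝ) ≤ 1 - ρ := by linarith
  have heq : ∀ l : ℕ, ENNReal.ofReal (ρ * (1 - ρ) ^ l)
      = ENNReal.ofReal ρ * (ENNReal.ofReal (1 - ρ)) ^ l := by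
    intro l
    rw [ENNReal.ofReal_mul h0.le, ENNReal.ofReal_pow hr]
  rw [tsum_congr heq, ENNReal.tsum_mul_left, ENNReal.tsum_geometric]
  have h2 : (1:ℝ≥0∞) - ENNReal.ofReal (1 - ρ) = ENNReal.ofReal ρ := by
    rw [← ENNReal.ofReal_one, ← ENNReal.ofReal_sub _ hr]
    norm_num
  rw [h2, ENNReal.mul_inv_cancel (by simp [h0]) ENNReal.ofReal_ne_top]


lemma slice_zero {𝒳 : Type*} [MeasurableSpace 𝒳] {ρ : ℝ} (hρ : ρ ∈ Set.Ioo (0:ℝ) 1)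
    {μ γ : Measure 𝒳} {Plaw : ℕ → Measure (ℕ → 𝒳)} {Q : Measure (ℕ × (ℕ → 𝒳))}
    (hQ : IsBayesLaw ρ μ γ Plaw Q) {A : Set (ℕ → 𝒳)} (hA : MeasurableSet A) :
    Q (({0} : Set ℕ) ×ˢ A) = 0 := by
  obtain ⟨hQprob, hlaws, hslice⟩ := hQ
  haveI := hQprob
  have hsub : (({0} : Set ℕ) ×ˢ A) ⊆ ({0} : Set ℕ) ×ˢ (Set.univ : Set (ℕ → 𝒳)) :=
    Set.prod_mono le_rfl (Set.subset_univ A)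
  refine le_antisymm (le_trans (measure_mono hsub) ?_) zero_le
  have hmeas : ∀ l : ℕ, MeasurableSet (({l+1} : Set ℕ) ×ˢ (Set.univ : Set (ℕ → 𝒳))) :=
    fun l => (measurableSet_singleton _).prod MeasurableSet.univ
  have hdisj : Pairwise (Function.onFun Disjoint
      (fun l : ℕ => ({l+1} : Set ℕ) ×ˢ (Set.univ : Set (ℕ → 𝒳)))) := by
    intro a b hab
    simp only [Function.onFun, Set.disjoint_left]
    rintro ⟨c, ω⟩ ⟨hc1, -⟩ ⟨hc2, -⟩
    simp only [Set.mem_singleton_iff] at hc1 hc2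
    exact hab (by omega)
  have hunion : Q (⋃ l : ℕ, ({l+1} : Set ℕ) ×ˢ (Set.univ : Set (ℕ → 𝒳))) = 1 := by
    rw [measure_iUnion hdisj hmeas]
    have : ∀ l : ℕ, Q (({l+1} : Set ℕ) ×ˢ (Set.univ : Set (ℕ → 𝒳)))
        = ENNReal.ofReal (ρ * (1 - ρ) ^ l) := by
      intro l
      haveI := (hlaws (l+1) (by omega)).1
      rw [hslice (l+1) (by omega) Set.univ MeasurableSet.univ, measure_univ, mul_one]
      norm_num
    rw [tsum_congr this, geom_sum hρ]
  have hdisj2 : Disjoint (({0} : Set ℕ) ×ˢ (Set.univ : Set (ℕ → 𝒳)))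
      (⋃ l : ℕ, ({l+1} : Set ℕ) ×ˢ (Set.univ : Set (ℕ → 𝒳))) := by
    simp only [Set.disjoint_left, Set.mem_iUnion]
    rintro ⟨c, ω⟩ ⟨hc1, -⟩ ⟨l, hc2, -⟩
    simp only [Set.mem_singleton_iff] at hc1 hc2
    omega
  have hle : Q (({0} : Set ℕ) ×ˢ (Set.univ : Set (ℕ → 𝒳)))
      + Q (⋃ l : ℕ, ({l+1} : Set ℕ) ×ˢ (Set.univ : Set (ℕ → 𝒳))) ≤ 1 := by
    rw [← measure_union hdisj2 (MeasurableSet.iUnion hmeas)]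
    exact prob_le_one
  rw [hunion] at hle
  have := (ENNReal.add_le_add_iff_right ENNReal.one_ne_top).mp (by simpa using hle : Q (({0} : Set ℕ) ×ˢ (Set.univ : Set (ℕ → 𝒳))) + 1 ≤ 0 + 1)
  simpa using this

/-- **core estimate in the proof of Theorem 3.**
Let `ν̲1 ≪ ν0` with `L* = log (dν̲1/dν0)` continuous on the support of `ν0`, and let `ν1` be
a probability measure whose `L*`-pushforward stochastically dominates that of `ν̲1`.  With a
geometric prior `π_k = ρ (1−ρ)^{k−1}` on the change point and the Shiryaev rule `τ_S*` with
threshold `η`, the average detection delay is maximized over the post-change distribution at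
`ν̲1`: `E^{ν0,ν̲1}[(τ_S* − Λ)⁺] ≥ E^{ν0,ν1}[(τ_S* − Λ)⁺]`; moreover
`PFA^{ν0,ν1}(τ_S*) = PFA^{ν0,ν̲1}(τ_S*)`. -/
theorem stmt_13 {𝒳 : Type*} [MeasurableSpace 𝒳] [TopologicalSpace 𝒳]
    (ν0 ν1u ν1 : Measure 𝒳)
    [IsProbabilityMeasure ν0] [IsProbabilityMeasure ν1u] [IsProbabilityMeasure ν1]
    (habs : ν1u ≪ ν0)
    (hLcont : ContinuousOn (llr ν1u ν0) (measSupport ν0))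
    (hdom : StochLarger (ν1.map (llr ν1u ν0)) (ν1u.map (llr ν1u ν0)))
    (ρ : ℝ) (hρ : ρ ∈ Set.Ioo (0 : ℝ) 1) (η : ℝ)
    -- Bayesian joint laws `Q₁ = Q^{ν0,ν̲1}` and `Q₂ = Q^{ν0,ν1}` of `(Λ, X)`
    (Plaw₁ Plaw₂ : ℕ → Measure (ℕ → 𝒳))
    (Q₁ Q₂ : Measure (ℕ × (ℕ → 𝒳)))
    (hQ₁ : IsBayesLaw ρ ν0 ν1u Plaw₁ Q₁)
    (hQ₂ : IsBayesLaw ρ ν0 ν1 Plaw₂ Q₂) :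
    ADD Q₂ (tauS ρ (llr ν1u ν0) η) ≤ ADD Q₁ (tauS ρ (llr ν1u ν0) η) ∧
    PFA Q₂ (tauS ρ (llr ν1u ν0) η) = PFA Q₁ (tauS ρ (llr ν1u ν0) η) := by
  have hL : Measurable (llr ν1u ν0) := measurable_llr _ _
  set L := llr ν1u ν0 with hLdef
  set τ := tauS ρ L η with hτ
  have hEgt : ∀ m : ℕ, MeasurableSet {ω : ℕ → 𝒳 | (m : ℕ∞) < τ ω} :=
    fun m => event_measurable hL ρ η m
  have hlt_succ : ∀ l : ℕ, {ω : ℕ → 𝒳 | τ ω < ((l + 1 : ℕ) : ℕ∞)}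
      = {ω : ℕ → 𝒳 | ((l : ℕ) : ℕ∞) < τ ω}ᶜ := by
    intro l
    ext ω
    simp only [Set.mem_setOf_eq, Set.mem_compl_iff, not_lt]
    rw [show ((l + 1 : ℕ) : ℕ∞) = ((l : ℕ) : ℕ∞) + 1 by push_cast; ring]
    exact ENat.lt_add_one_iff (by simp)
  have hzero : {ω : ℕ → 𝒳 | τ ω < ((0 : ℕ) : ℕ∞)} = ∅ := by
    ext ω; simp
  have hElt : ∀ l : ℕ, MeasurableSet {ω : ℕ → 𝒳 | τ ω < (l : ℕ∞)} := by
    intro l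
    cases l with
    | zero => rw [show ((0 : ℕ) : ℕ∞) = (((0:ℕ) : ℕ) : ℕ∞) from rfl, hzero]
              exact MeasurableSet.empty
    | succ l => rw [hlt_succ l]; exact (hEgt l).compl
  obtain ⟨hQ1prob, hlaws1, hslice1⟩ := hQ₁
  obtain ⟨hQ2prob, hlaws2, hslice2⟩ := hQ₂
  constructor
  · -- ADD comparison
    show (∫⁻ p, ((τ p.2 - (p.1 : ℕ∞) : ℕ∞) : ℝ≥0∞) ∂Q₂)
        ≤ ∫⁻ p, ((τ p.2 - (p.1 : ℕ∞) : ℕ∞) : ℝ≥0∞) ∂Q₁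
    rw [ADD_decomp Q₁ τ hEgt, ADD_decomp Q₂ τ hEgt]
    refine ENNReal.tsum_le_tsum fun l => ENNReal.tsum_le_tsum fun n => ?_
    cases l with
    | zero =>
      rw [slice_zero hρ ⟨hQ1prob, hlaws1, hslice1⟩ (hEgt (0 + n)),
        slice_zero hρ ⟨hQ2prob, hlaws2, hslice2⟩ (hEgt (0 + n))]
    | succ l =>
      rw [hslice1 (l + 1) (by omega) _ (hEgt (l + 1 + n)),
        hslice2 (l + 1) (by omega) _ (hEgt (l + 1 + n))]
      exact mul_le_mul_right
        (event_compare (hlaws1 (l + 1) (by omega)) (hlaws2 (l + 1) (by omega)) hL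
          (fun t => hdom t) hρ η (l + 1 + n)) _
  · -- PFA equality
    show Q₂ {p | τ p.2 < (p.1 : ℕ∞)} = Q₁ {p | τ p.2 < (p.1 : ℕ∞)}
    rw [PFA_decomp Q₁ τ hElt, PFA_decomp Q₂ τ hElt]
    apply tsum_congr
    intro l
    cases l with
    | zero =>
      rw [show ((0 : ℕ) : ℕ∞) = (((0:ℕ) : ℕ) : ℕ∞) from rfl, hzero]
      simp
    | succ l =>
      rw [show ((l + 1 : ℕ) : ℕ∞) = (((l + 1 : ℕ) : ℕ) : ℕ∞) from rfl, hlt_succ l]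
      haveI := (hlaws1 (l + 1) (by omega)).1
      haveI := (hlaws2 (l + 1) (by omega)).1
      rw [hslice1 (l + 1) (by omega) _ (hEgt l).compl,
        hslice2 (l + 1) (by omega) _ (hEgt l).compl,
        prob_compl_eq_one_sub (hEgt l), prob_compl_eq_one_sub (hEgt l),
        event_same (hlaws1 (l + 1) (by omega)) (hlaws2 (l + 1) (by omega)) hL ρ η
          (by omega : l < l + 1)]
end

section
/- (Core estimate in the proof of Theorem 2, stated for the Shiryaev–Roberts procedure with fixed initial value r.) Let (𝒳,𝓕) be a measurable space, ν0 and ν̲1 probability measures with ν̲1 ≪ ν0, and L* = log(dν̲1/dν0) continuous on the support of ν0. Let ν1 be a probability measure such that the pushforward of ν1 under L* is stochastically larger than the pushforward of ν̲1 under L*. Fix r ≥ 0, define R_0 = r and R_n = e^{L*(X_n)}(1 + R_{n−1}) for n ≥ 1, and let τ_r = inf{n ≥ 1 : R_n ≥ η} for a threshold η. Then for every change point λ ≥ 1 and every integer N ≥ 1 with P_λ^{ν0,ν̲1}(τ_r ≥ λ) > 0, P_λ^{ν0,ν̲1}( τ_r − λ ≤ N | τ_r ≥ λ ) ≤ P_λ^{ν0,ν1}(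 τ_r − λ ≤ N | τ_r ≥ λ ); consequently E_λ^{ν0,ν̲1}[ τ_r − λ | τ_r ≥ λ ] ≥ E_λ^{ν0,ν1}[ τ_r − λ | τ_r ≥ λ ]. -/
open MeasureTheory ProbabilityTheory ENNReal

/-- The Shiryaev–Roberts statistic with initial value `r`:
`R_0 = r` and `R_n = exp (L(X_n)) (1 + R_{n−1})` for `n ≥ 1`. -/
noncomputable def srProc {𝒳 : Type*} (r : ℝ) (L : 𝒳 → ℝ) (ω : ℕ → 𝒳) : ℕ → ℝ
  | 0 => r
  | n + 1 => Real.exp (L (ω (n + 1))) * (1 + srProc r L ω n)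

/-- The Shiryaev–Roberts (SR-`r`) stopping time `τ_r = inf {n ≥ 1 : R_n ≥ η}`. -/
noncomputable def tauSR {𝒳 : Type*} (r : ℝ) (L : 𝒳 → ℝ) (η : ℝ) (ω : ℕ → 𝒳) : ℕ∞ :=
  sInf {m : ℕ∞ | ∃ n : ℕ, m = n ∧ 1 ≤ n ∧ η ≤ srProc r L ω n}

section Aux

open Function Set

variable {𝒳 : Type*}

lemma srProc_nonneg {r : ℝ} (hr : 0 ≤ r) (L : 𝒳 → ℝ) (ω : ℕ → 𝒳) :
    ∀ n, 0 ≤ srProc r L ω n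
  | 0 => hr
  | n + 1 => by
    have h := srProc_nonneg hr L ω n
    simp only [srProc]
    have := Real.exp_pos (L (ω (n + 1)))
    nlinarith

lemma srProc_congr {r : ℝ} {L : 𝒳 → ℝ} {ω ω' : ℕ → 𝒳} :
    ∀ n, (∀ k, 1 ≤ k → k ≤ n → ω k = ω' k) → srProc r L ω n = srProc r L ω' n
  | 0, _ => rfl
  | n + 1, h => by
    simp only [srProc, h (n + 1) (by omega) le_rfl,
      srProc_congr n fun k h1 h2 => h k h1 (by omega)]

lemma srProc_comp (r : ℝ) (L : 𝒳 → ℝ) (ω : ℕ → 𝒳) :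
    ∀ n, srProc r L ω n = srProc r id (fun k => L (ω k)) n
  | 0 => rfl
  | n + 1 => by
    simp only [srProc, srProc_comp r L ω n]
    rfl

lemma srProc_mono {r : ℝ} (hr : 0 ≤ r) {y y' : ℕ → ℝ} (h : ∀ k, y k ≤ y' k) :
    ∀ n, srProc r id y n ≤ srProc r id y' n
  | 0 => le_rfl
  | n + 1 => by
    have h1 := srProc_mono hr h n
    have h2 := srProc_nonneg hr id y n
    simp only [srProc, id_eq]
    have h3 := Real.exp_le_exp.2 (h (n + 1))
    have h4 := Real.exp_pos (y (n + 1))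
    nlinarith

lemma measurable_srProc' {α : Type*} [MeasurableSpace α] {y : α → ℕ → ℝ}
    (hy : ∀ k, Measurable fun a => y a k) (r : ℝ) :
    ∀ n, Measurable fun a => srProc r id (y a) n
  | 0 => measurable_const
  | n + 1 => by
    simp only [srProc, id_eq]
    exact (Real.measurable_exp.comp (hy (n + 1))).mul
      (measurable_const.add (measurable_srProc' hy r n))

lemma measurable_srProc [MeasurableSpace 𝒳] {L : 𝒳 → ℝ} (hL : Measurable L) (r : ℝ) (n : ℕ) :
    Measurable fun ω : ℕ → 𝒳 => srProc r L ω n := by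
  have h : (fun ω : ℕ → 𝒳 => srProc r L ω n)
      = fun ω => srProc r id (fun k => L (ω k)) n := funext fun ω => srProc_comp r L ω n
  rw [h]
  exact measurable_srProc' (fun k => hL.comp (measurable_pi_apply k)) r n

lemma tauSR_le_iff {r : ℝ} {L : 𝒳 → ℝ} {η : ℝ} {ω : ℕ → 𝒳} {K : ℕ} :
    tauSR r L η ω ≤ (K : ℕ∞) ↔ ∃ n, 1 ≤ n ∧ n ≤ K ∧ η ≤ srProc r L ω n := by
  constructor
  · intro h
    have h2 : tauSR r L η ω < ((K + 1 : ℕ) : ℕ∞) :=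
      lt_of_le_of_lt h (by exact_mod_cast Nat.lt_succ_self K)
    rw [tauSR, sInf_lt_iff] at h2
    obtain ⟨m, ⟨n, rfl, h1, hη⟩, hlt⟩ := h2
    have : n < K + 1 := by exact_mod_cast hlt
    exact ⟨n, h1, by omega, hη⟩
  · rintro ⟨n, h1, hK, hη⟩
    exact le_trans (sInf_le ⟨n, rfl, h1, hη⟩) (by exact_mod_cast hK)

lemma le_tauSR_iff {r : ℝ} {L : 𝒳 → ℝ} {η : ℝ} {ω : ℕ → 𝒳} {lam : ℕ} :
    (lam : ℕ∞) ≤ tauSR r L η ω ↔ ∀ n, 1 ≤ n → n < lam → srProc r L ω n < η := by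
  rw [tauSR, le_sInf_iff]
  constructor
  · intro h n h1 hlt
    by_contra hc
    push_neg at hc
    have h2 := h (n : ℕ∞) ⟨n, rfl, h1, hc⟩
    have : lam ≤ n := by exact_mod_cast h2
    omega
  · rintro h m ⟨n, rfl, h1, hη⟩
    by_contra hc
    push_neg at hc
    have hn : n < lam := by exact_mod_cast hc
    exact absurd hη (not_le.2 (h n h1 hn))

lemma meas_le_of_isUpperSet {μ ν : Measure ℝ} [IsProbabilityMeasure μ] [IsProbabilityMeasure ν]
    (h : StochLarger ν μ) {S : Set ℝ} (hS : IsUpperSet S) : μ S ≤ ν S := by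
  rcases S.eq_empty_or_nonempty with rfl | hne
  · simp
  by_cases hb : BddBelow S
  · set a := sInf S with ha
    by_cases haS : a ∈ S
    · have hEq : S = Set.Ici a :=
        subset_antisymm (fun x hx => csInf_le hb hx) fun x hx => hS hx haS
      rw [hEq]
      exact h a
    · have hEq : S = Set.Ioi a := by
        apply subset_antisymm
        · intro x hx
          rcases eq_or_lt_of_le (csInf_le hb hx) with h' | h'
          · exact absurd hx (h' ▸ haS)
          · exact h'
        · intro x hx
          obtain ⟨s, hsS, hsx⟩ := (csInf_lt_iff hb hne).mp hx
          exact hS hsx.le hsS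
      have hU : ∀ μ' : Measure ℝ, μ' (Set.Ioi a) = ⨆ n : ℕ, μ' (Set.Ici (a + 1 / (n + 1))) := by
        intro μ'
        have hmono : Monotone fun n : ℕ => Set.Ici (a + 1 / ((n : ℝ) + 1)) := by
          intro n m hnm
          apply Set.Ici_subset_Ici.2
          have hnm' : (n : ℝ) ≤ m := Nat.cast_le.2 hnm
          have : (1 : ℝ) / ((m : ℝ) + 1) ≤ 1 / ((n : ℝ) + 1) :=
            one_div_le_one_div_of_le (by positivity) (by linarith)
          linarith
        have hun : Set.Ioi a = ⋃ n : ℕ, Set.Ici (a + 1 / ((n : ℝ) + 1)) := by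
          ext x
          simp only [Set.mem_Ioi, Set.mem_iUnion, Set.mem_Ici]
          constructor
          · intro hx
            obtain ⟨n, hn⟩ := exists_nat_one_div_lt (sub_pos.2 hx)
            exact ⟨n, by linarith⟩
          · rintro ⟨n, hn⟩
            have : (0 : ℝ) < 1 / ((n : ℝ) + 1) := by positivity
            linarith
        rw [hun, Directed.measure_iUnion hmono.directed_le]
      rw [hEq, hU μ, hU ν]
      exact iSup_mono fun n => h _
  · have hEq : S = Set.univ := by
      ext x
      simp only [Set.mem_univ, iff_true]
      have : ¬∀ b, b ∈ S → x ≤ b := fun hc => hb ⟨x, hc⟩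
      push_neg at this
      obtain ⟨s, hsS, hsx⟩ := this
      exact hS hsx.le hsS
    rw [hEq]
    simp

lemma lintegral_mono_stochLarger {μ ν : Measure ℝ} [IsProbabilityMeasure μ]
    [IsProbabilityMeasure ν] (h : StochLarger ν μ) {g : ℝ → ℝ≥0∞} (hg : Monotone g)
    (hg1 : ∀ x, g x ≤ 1) : ∫⁻ x, g x ∂μ ≤ ∫⁻ x, g x ∂ν := by
  set f : ℝ → ℝ := fun x => (g x).toReal with hf
  have hfin : ∀ x, g x ≠ ⊤ := fun x => ne_top_of_le_ne_top one_ne_top (hg1 x)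
  have hgf : ∀ x, g x = ENNReal.ofReal (f x) := fun x => (ENNReal.ofReal_toReal (hfin x)).symm
  have hfmono : Monotone f := fun a b hab => ENNReal.toReal_mono (hfin b) (hg hab)
  have hfm : Measurable f := hfmono.measurable
  have h0 : (0 : ℝ → ℝ) ≤ᵐ[μ] f := ae_of_all _ fun x => ENNReal.toReal_nonneg
  have h0' : (0 : ℝ → ℝ) ≤ᵐ[ν] f := ae_of_all _ fun x => ENNReal.toReal_nonneg
  calc ∫⁻ x, g x ∂μ = ∫⁻ x, ENNReal.ofReal (f x) ∂μ := by simp_rw [hgf]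
    _ = ∫⁻ t in Set.Ioi 0, μ {a | t < f a} :=
        lintegral_eq_lintegral_meas_lt μ h0 hfm.aemeasurable
    _ ≤ ∫⁻ t in Set.Ioi 0, ν {a | t < f a} := by
        refine lintegral_mono fun t => ?_
        exact meas_le_of_isUpperSet h fun a b hab ha => lt_of_lt_of_le ha (hfmono hab)
    _ = ∫⁻ x, ENNReal.ofReal (f x) ∂ν :=
        (lintegral_eq_lintegral_meas_lt ν h0' hfm.aemeasurable).symm
    _ = ∫⁻ x, g x ∂ν := by simp_rw [hgf]

lemma updateFinset_update_comm {ι : Type*} [DecidableEq ι] {π : ι → Type*} (x : ∀ i, π i)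
    {s : Finset ι} {i : ι} (hi : i ∉ s) (t : π i) (y : ∀ j : s, π j) :
    Function.updateFinset (Function.update x i t) s y
      = Function.update (Function.updateFinset x s y) i t := by
  funext j
  rcases eq_or_ne j i with rfl | hj
  · have hjs : j ∉ s := hi
    simp [Function.updateFinset, hjs]
  · by_cases hjs : j ∈ s <;>
      simp [Function.updateFinset, hjs, Function.update_of_ne hj]

lemma pi_lintegral_mono {M : ℕ} {μ ν : Fin M → Measure ℝ}
    [∀ i, IsProbabilityMeasure (μ i)] [∀ i, IsProbabilityMeasure (ν i)]
    {f : (Fin M → ℝ) → ℝ≥0∞} (hf : Measurable f) (hf1 : ∀ x, f x ≤ 1)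
    (hcond : ∀ i, μ i = ν i ∨ (StochLarger (ν i) (μ i) ∧
      ∀ (x : Fin M → ℝ) (t t' : ℝ), t ≤ t' →
        f (Function.update x i t) ≤ f (Function.update x i t'))) :
    ∫⁻ x, f x ∂Measure.pi μ ≤ ∫⁻ x, f x ∂Measure.pi ν := by
  classical
  have hb : ∀ (κ : Fin M → Measure ℝ), (∀ i, IsProbabilityMeasure (κ i)) →
      ∀ (s : Finset (Fin M)) (x : Fin M → ℝ), (∫⋯∫⁻_s, f ∂κ) x ≤ 1 := by
    intro κ hκ s x
    rw [MeasureTheory.lmarginal]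
    calc ∫⁻ y, f (Function.updateFinset x s y) ∂Measure.pi (fun i : s => κ i)
        ≤ ∫⁻ _, 1 ∂Measure.pi (fun i : s => κ i) := lintegral_mono fun y => hf1 _
      _ = 1 := by
          haveI : ∀ i : s, IsProbabilityMeasure (κ i) := fun i => hκ i
          simp
  have key : ∀ s : Finset (Fin M), ∀ x, (∫⋯∫⁻_s, f ∂μ) x ≤ (∫⋯∫⁻_s, f ∂ν) x := by
    intro s
    induction s using Finset.induction_on with
    | empty => intro x; simp
    | @insert i s hi ih =>
      intro x
      rw [MeasureTheory.lmarginal_insert _ hf hi, MeasureTheory.lmarginal_insert _ hf hi]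
      have hmargmono : ∀ (x : Fin M → ℝ) (t t' : ℝ), t ≤ t' →
          (∀ (z : Fin M → ℝ) (a b : ℝ), a ≤ b →
            f (Function.update z i a) ≤ f (Function.update z i b)) →
          (∫⋯∫⁻_s, f ∂ν) (Function.update x i t) ≤ (∫⋯∫⁻_s, f ∂ν) (Function.update x i t') := by
        intro x t t' htt' hmono
        rw [MeasureTheory.lmarginal, MeasureTheory.lmarginal]
        refine lintegral_mono fun y => ?_
        rw [updateFinset_update_comm x hi t y, updateFinset_update_comm x hi t' y]
        exact hmono _ _ _ htt'
      calc ∫⁻ t, (∫⋯∫⁻_s, f ∂μ) (Function.update x i t) ∂μ i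
          ≤ ∫⁻ t, (∫⋯∫⁻_s, f ∂ν) (Function.update x i t) ∂μ i :=
            lintegral_mono fun t => ih _
        _ ≤ ∫⁻ t, (∫⋯∫⁻_s, f ∂ν) (Function.update x i t) ∂ν i := by
            rcases hcond i with heq | ⟨hdom, hmono⟩
            · rw [heq]
            · exact lintegral_mono_stochLarger hdom
                (fun t t' htt' => hmargmono x t t' htt' hmono)
                (fun t => hb ν inferInstance s _)
  have x0 : Fin M → ℝ := fun _ => 0
  rw [MeasureTheory.lintegral_eq_lmarginal_univ x0, MeasureTheory.lintegral_eq_lmarginal_univ x0]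
  exact key Finset.univ x0

lemma pi_meas_mono_s14 {M : ℕ} {μ ν : Fin M → Measure ℝ}
    [∀ i, IsProbabilityMeasure (μ i)] [∀ i, IsProbabilityMeasure (ν i)]
    {E : Set (Fin M → ℝ)} (hE : MeasurableSet E)
    (hcond : ∀ i, μ i = ν i ∨ (StochLarger (ν i) (μ i) ∧
      ∀ (x : Fin M → ℝ) (t t' : ℝ), t ≤ t' →
        Function.update x i t ∈ E → Function.update x i t' ∈ E)) :
    Measure.pi μ E ≤ Measure.pi ν E := by
  classical
  have hind : Measurable (E.indicator (fun _ => (1 : ℝ≥0∞))) :=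
    measurable_const.indicator hE
  have h1 : ∀ x, E.indicator (fun _ => (1 : ℝ≥0∞)) x ≤ 1 := by
    intro x; by_cases hx : x ∈ E <;> simp [Set.indicator_apply, hx]
  have := pi_lintegral_mono (μ := μ) (ν := ν) hind h1 ?_
  · rwa [lintegral_indicator hE, lintegral_indicator hE, setLIntegral_one,
      setLIntegral_one] at this
  · intro i
    rcases hcond i with heq | ⟨hdom, himp⟩
    · exact Or.inl heq
    · refine Or.inr ⟨hdom, fun x t t' htt' => ?_⟩
      by_cases hx : Function.update x i t ∈ E
      · simp [Set.indicator_apply, hx, himp x t t' htt' hx]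
      · simp [Set.indicator_apply, hx]

lemma pi_meas_eq {M : ℕ} {μ ν : Fin M → Measure ℝ}
    [∀ i, IsProbabilityMeasure (μ i)] [∀ i, IsProbabilityMeasure (ν i)]
    {E : Set (Fin M → ℝ)} (hE : MeasurableSet E)
    (hcond : ∀ i, μ i = ν i ∨ (StochLarger (ν i) (μ i) ∧
      ∀ (x : Fin M → ℝ) (t t' : ℝ), Function.update x i t ∈ E → Function.update x i t' ∈ E)) :
    Measure.pi μ E = Measure.pi ν E := by
  have hle : Measure.pi μ E ≤ Measure.pi ν E := by
    refine pi_meas_mono_s14 hE fun i => ?_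
    rcases hcond i with heq | ⟨hdom, himp⟩
    · exact Or.inl heq
    · exact Or.inr ⟨hdom, fun x t t' _ => himp x t t'⟩
  have hlec : Measure.pi μ Eᶜ ≤ Measure.pi ν Eᶜ := by
    refine pi_meas_mono_s14 hE.compl fun i => ?_
    rcases hcond i with heq | ⟨hdom, himp⟩
    · exact Or.inl heq
    · exact Or.inr ⟨hdom, fun x t t' _ hx => fun hc => hx (himp x t' t hc)⟩
  refine le_antisymm hle ?_
  have h1 : Measure.pi μ Eᶜ = 1 - Measure.pi μ E := by
    rw [measure_compl hE (measure_ne_top _ _), measure_univ]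
  have h2 : Measure.pi ν Eᶜ = 1 - Measure.pi ν E := by
    rw [measure_compl hE (measure_ne_top _ _), measure_univ]
  rw [h1, h2] at hlec
  have hμ1 : Measure.pi μ E ≤ 1 := prob_le_one
  have hν1 : Measure.pi ν E ≤ 1 := prob_le_one
  calc Measure.pi ν E = 1 - (1 - Measure.pi ν E) :=
        (ENNReal.sub_sub_cancel one_ne_top hν1).symm
    _ ≤ 1 - (1 - Measure.pi μ E) := tsub_le_tsub_left hlec 1
    _ = Measure.pi μ E := ENNReal.sub_sub_cancel one_ne_top hμ1

lemma map_L_pi {𝒳 : Type*} [MeasurableSpace 𝒳] {P : Measure (ℕ → 𝒳)} [IsProbabilityMeasure P]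
    (hind : iIndepFun (fun (n : ℕ) (ω : ℕ → 𝒳) => ω n) P)
    {L : 𝒳 → ℝ} (hL : Measurable L) (M : ℕ) :
    P.map (fun ω (i : Fin M) => L (ω ((i : ℕ) + 1)))
      = Measure.pi (fun i : Fin M => P.map (fun ω => L (ω ((i : ℕ) + 1)))) := by
  classical
  have hLe : ∀ n : ℕ, Measurable fun ω : ℕ → 𝒳 => L (ω n) :=
    fun n => hL.comp (measurable_pi_apply n)
  have hT : Measurable fun (ω : ℕ → 𝒳) (i : Fin M) => L (ω ((i : ℕ) + 1)) :=
    measurable_pi_lambda _ fun i => hLe _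
  haveI : ∀ i : Fin M, IsProbabilityMeasure (P.map fun ω => L (ω ((i : ℕ) + 1))) :=
    fun i => Measure.isProbabilityMeasure_map (hLe _).aemeasurable
  refine (Measure.pi_eq fun s hs => ?_).symm
  rw [Measure.map_apply hT (MeasurableSet.pi Set.countable_univ fun i _ => hs i)]
  have hind' : iIndepFun (fun (n : ℕ) (ω : ℕ → 𝒳) => L (ω n)) P :=
    hind.comp (fun _ => L) fun _ => hL
  set sets : ℕ → Set ℝ := fun n => if h : 0 < n ∧ n ≤ M then s ⟨n - 1, by omega⟩ else Set.univ
    with hsets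
  have hsets_meas : ∀ n, MeasurableSet (sets n) := by
    intro n
    rw [hsets]
    dsimp only
    split
    · exact hs _
    · exact MeasurableSet.univ
  have hsets_eq : ∀ i : Fin M, sets ((i : ℕ) + 1) = s i := by
    intro i
    have h : 0 < (i : ℕ) + 1 ∧ (i : ℕ) + 1 ≤ M := ⟨Nat.succ_pos _, i.isLt⟩
    rw [hsets]
    dsimp only
    rw [dif_pos h]
    congr 1
  set S : Finset ℕ := Finset.image (fun i : Fin M => (i : ℕ) + 1) Finset.univ with hS
  have hprod := hind'.measure_inter_preimage_eq_mul S (sets := sets) fun n _ => hsets_meas n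
  have hIeq : (⋂ n ∈ S, (fun ω : ℕ → 𝒳 => L (ω n)) ⁻¹' sets n)
      = (fun ω (i : Fin M) => L (ω ((i : ℕ) + 1))) ⁻¹' Set.pi Set.univ s := by
    ext ω
    simp only [Set.mem_iInter, Set.mem_preimage, Set.mem_pi, Set.mem_univ, true_implies, hS,
      Finset.mem_image, Finset.mem_univ, true_and]
    constructor
    · intro h i
      have := h ((i : ℕ) + 1) ⟨i, rfl⟩
      rwa [hsets_eq] at this
    · rintro h n ⟨i, rfl⟩
      rw [hsets_eq]
      exact h i
  rw [hIeq] at hprod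
  have hinj : ∀ a ∈ (Finset.univ : Finset (Fin M)), ∀ b ∈ (Finset.univ : Finset (Fin M)),
      (a : ℕ) + 1 = (b : ℕ) + 1 → a = b := fun a _ b _ h => Fin.ext (by omega)
  rw [hprod, hS, Finset.prod_image (g := fun i : Fin M => (i : ℕ) + 1) hinj]
  refine Finset.prod_congr rfl fun i _ => ?_
  rw [hsets_eq, Measure.map_apply (hLe _) (hs i)]

end Aux

section Core

open Function Set

lemma core_ineq {𝒳 : Type*} [MeasurableSpace 𝒳]
    {ν0 ν1u ν1 : Measure 𝒳} [IsProbabilityMeasure ν0] [IsProbabilityMeasure ν1u]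
    [IsProbabilityMeasure ν1] {L : 𝒳 → ℝ} (hL : Measurable L)
    (hdom : StochLarger (ν1.map L) (ν1u.map L))
    {r : ℝ} (hr : 0 ≤ r) (η : ℝ) {lam : ℕ} (hlam : 1 ≤ lam)
    {P₁ P₂ : Measure (ℕ → 𝒳)} [IsProbabilityMeasure P₁] [IsProbabilityMeasure P₂]
    (hP₁indep : iIndepFun (fun (n : ℕ) (ω : ℕ → 𝒳) => ω n) P₁)
    (hP₂indep : iIndepFun (fun (n : ℕ) (ω : ℕ → 𝒳) => ω n) P₂)
    (hP₁marg : ∀ n : ℕ, 1 ≤ n → P₁.map (fun ω => ω n) = if n < lam then ν0 else ν1u)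
    (hP₂marg : ∀ n : ℕ, 1 ≤ n → P₂.map (fun ω => ω n) = if n < lam then ν0 else ν1)
    (N : ℕ) :
    P₁ ({ω | tauSR r L η ω ≤ ((lam + N : ℕ) : ℕ∞)} ∩ {ω | (lam : ℕ∞) ≤ tauSR r L η ω})
      ≤ P₂ ({ω | tauSR r L η ω ≤ ((lam + N : ℕ) : ℕ∞)} ∩ {ω | (lam : ℕ∞) ≤ tauSR r L η ω})
    ∧ P₁ {ω | (lam : ℕ∞) ≤ tauSR r L η ω} = P₂ {ω | (lam : ℕ∞) ≤ tauSR r L η ω} := by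
  classical
  set M := lam + N with hM
  set T : (ℕ → 𝒳) → (Fin M → ℝ) := fun ω i => L (ω ((i : ℕ) + 1)) with hT
  have hTmeas : Measurable T :=
    measurable_pi_lambda _ fun i => hL.comp (measurable_pi_apply _)
  set seq : (Fin M → ℝ) → ℕ → ℝ :=
    fun x n => if h : 1 ≤ n ∧ n ≤ M then x ⟨n - 1, by omega⟩ else 0 with hseq
  have hseqT : ∀ (ω : ℕ → 𝒳) (n : ℕ), 1 ≤ n → n ≤ M → seq (T ω) n = L (ω n) := by
    intro ω n h1 h2
    rw [hseq]
    dsimp only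
    rw [dif_pos ⟨h1, h2⟩, hT]
    dsimp only
    congr 2
    omega
  have hsr : ∀ (ω : ℕ → 𝒳) (n : ℕ), n ≤ M → srProc r id (seq (T ω)) n = srProc r L ω n := by
    intro ω n hn
    rw [srProc_comp r L ω n]
    exact srProc_congr n fun k h1 h2 => hseqT ω k h1 (by omega)
  set B' : Set (Fin M → ℝ) :=
    {x | ∀ n, 1 ≤ n → n < lam → srProc r id (seq x) n < η} with hB'
  set A' : Set (Fin M → ℝ) :=
    {x | ∃ n, 1 ≤ n ∧ n ≤ M ∧ η ≤ srProc r id (seq x) n} with hA'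
  have hseq_meas : ∀ n, Measurable fun x : Fin M → ℝ => seq x n := by
    intro n
    rw [hseq]
    dsimp only
    by_cases h : 1 ≤ n ∧ n ≤ M
    · simpa [dif_pos h] using measurable_pi_apply (⟨n - 1, by omega⟩ : Fin M)
    · simp only [dif_neg h]
      exact measurable_const
  have hsr_meas : ∀ n, Measurable fun x : Fin M → ℝ => srProc r id (seq x) n :=
    fun n => measurable_srProc' hseq_meas r n
  have hB'meas : MeasurableSet B' := by
    have h : B' = ⋂ n, ⋂ (_ : 1 ≤ n), ⋂ (_ : n < lam), {x | srProc r id (seq x) n < η} := by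
      ext x
      constructor
      · intro hx
        exact Set.mem_iInter.2 fun n => Set.mem_iInter.2 fun h1 => Set.mem_iInter.2 fun h2 =>
          hx n h1 h2
      · intro hx n h1 h2
        exact Set.mem_iInter.1 (Set.mem_iInter.1 (Set.mem_iInter.1 hx n) h1) h2
    rw [h]
    exact MeasurableSet.iInter fun n => MeasurableSet.iInter fun _ =>
      MeasurableSet.iInter fun _ => measurableSet_lt (hsr_meas n) measurable_const
  have hA'meas : MeasurableSet A' := by
    have h : A' = ⋃ n, ⋃ (_ : 1 ≤ n), ⋃ (_ : n ≤ M), {x | η ≤ srProc r id (seq x) n} := by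
      ext x
      constructor
      · rintro ⟨n, h1, h2, h3⟩
        exact Set.mem_iUnion.2 ⟨n, Set.mem_iUnion.2 ⟨h1, Set.mem_iUnion.2 ⟨h2, h3⟩⟩⟩
      · intro hx
        obtain ⟨n, hx⟩ := Set.mem_iUnion.1 hx
        obtain ⟨h1, hx⟩ := Set.mem_iUnion.1 hx
        obtain ⟨h2, h3⟩ := Set.mem_iUnion.1 hx
        exact ⟨n, h1, h2, h3⟩
    rw [h]
    exact MeasurableSet.iUnion fun n => MeasurableSet.iUnion fun _ =>
      MeasurableSet.iUnion fun _ => measurableSet_le measurable_const (hsr_meas n)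
  have hBpre : {ω : ℕ → 𝒳 | (lam : ℕ∞) ≤ tauSR r L η ω} = T ⁻¹' B' := by
    ext ω
    simp only [Set.mem_setOf_eq, Set.mem_preimage, hB', le_tauSR_iff]
    constructor
    · intro h n h1 h2
      rw [hsr ω n (by omega)]
      exact h n h1 h2
    · intro h n h1 h2
      have h3 := h n h1 h2
      rwa [hsr ω n (by omega)] at h3
  have hApre : {ω : ℕ → 𝒳 | tauSR r L η ω ≤ (M : ℕ∞)} = T ⁻¹' A' := by
    ext ω
    simp only [Set.mem_setOf_eq, Set.mem_preimage, hA', tauSR_le_iff]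
    constructor
    · rintro ⟨n, h1, h2, h3⟩
      exact ⟨n, h1, h2, by rwa [hsr ω n h2]⟩
    · rintro ⟨n, h1, h2, h3⟩
      exact ⟨n, h1, h2, by rwa [hsr ω n h2] at h3⟩
  have hm₁ : ∀ i : Fin M, P₁.map (fun ω => L (ω ((i : ℕ) + 1)))
      = if (i : ℕ) + 1 < lam then ν0.map L else ν1u.map L := by
    intro i
    have h : (fun ω : ℕ → 𝒳 => L (ω ((i : ℕ) + 1))) = L ∘ (fun ω => ω ((i : ℕ) + 1)) := rfl
    rw [h, ← Measure.map_map hL (measurable_pi_apply _), hP₁marg _ (by omega),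
      apply_ite (Measure.map L)]
  have hm₂ : ∀ i : Fin M, P₂.map (fun ω => L (ω ((i : ℕ) + 1)))
      = if (i : ℕ) + 1 < lam then ν0.map L else ν1.map L := by
    intro i
    have h : (fun ω : ℕ → 𝒳 => L (ω ((i : ℕ) + 1))) = L ∘ (fun ω => ω ((i : ℕ) + 1)) := rfl
    rw [h, ← Measure.map_map hL (measurable_pi_apply _), hP₂marg _ (by omega),
      apply_ite (Measure.map L)]
  haveI h₁inst : ∀ i : Fin M,
      IsProbabilityMeasure (P₁.map (fun ω : ℕ → 𝒳 => L (ω ((i : ℕ) + 1)))) :=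
    fun i => Measure.isProbabilityMeasure_map ((hL.comp (measurable_pi_apply _)).aemeasurable)
  haveI h₂inst : ∀ i : Fin M,
      IsProbabilityMeasure (P₂.map (fun ω : ℕ → 𝒳 => L (ω ((i : ℕ) + 1)))) :=
    fun i => Measure.isProbabilityMeasure_map ((hL.comp (measurable_pi_apply _)).aemeasurable)
  have hpi₁ := map_L_pi hP₁indep hL M
  have hpi₂ := map_L_pi hP₂indep hL M
  have hins : ∀ (i : Fin M), lam ≤ (i : ℕ) + 1 → ∀ (x : Fin M → ℝ) (t : ℝ) (n : ℕ), n < lam →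
      srProc r id (seq (Function.update x i t)) n = srProc r id (seq x) n := by
    intro i hi x t n hn
    apply srProc_congr
    intro k h1 h2
    rw [hseq]
    dsimp only
    by_cases h : 1 ≤ k ∧ k ≤ M
    · rw [dif_pos h, dif_pos h]
      have hne : (⟨k - 1, by omega⟩ : Fin M) ≠ i := by
        intro hc
        have hval := congrArg Fin.val hc
        simp only [Fin.val_mk] at hval
        omega
      rw [Function.update_of_ne hne]
    · rw [dif_neg h, dif_neg h]
  have hmono : ∀ (i : Fin M) (x : Fin M → ℝ) (t t' : ℝ), t ≤ t' → ∀ n,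
      srProc r id (seq (Function.update x i t)) n
        ≤ srProc r id (seq (Function.update x i t')) n := by
    intro i x t t' htt' n
    apply srProc_mono hr
    intro k
    rw [hseq]
    dsimp only
    by_cases h : 1 ≤ k ∧ k ≤ M
    · rw [dif_pos h, dif_pos h]
      by_cases hk : (⟨k - 1, by omega⟩ : Fin M) = i
      · rw [hk, Function.update_self, Function.update_self]
        exact htt'
      · rw [Function.update_of_ne hk, Function.update_of_ne hk]
    · rw [dif_neg h, dif_neg h]
  constructor
  · have hev : {ω : ℕ → 𝒳 | tauSR r L η ω ≤ (M : ℕ∞)}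
        ∩ {ω | (lam : ℕ∞) ≤ tauSR r L η ω} = T ⁻¹' (A' ∩ B') := by
      rw [Set.preimage_inter, ← hApre, ← hBpre]
    rw [hev, ← Measure.map_apply hTmeas (hA'meas.inter hB'meas),
      ← Measure.map_apply hTmeas (hA'meas.inter hB'meas), hpi₁, hpi₂]
    refine pi_meas_mono_s14 (hA'meas.inter hB'meas) fun i => ?_
    by_cases hi : (i : ℕ) + 1 < lam
    · left
      rw [hm₁ i, hm₂ i, if_pos hi, if_pos hi]
    · right
      constructor
      · rw [hm₁ i, hm₂ i, if_neg hi, if_neg hi]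
        exact hdom
      · rintro x t t' htt' ⟨⟨n, h1, h2, h3⟩, hB⟩
        refine ⟨⟨n, h1, h2, le_trans h3 (hmono i x t t' htt' n)⟩, ?_⟩
        intro n h1 h2
        rw [hins i (by omega) x t' n h2]
        have h4 := hB n h1 h2
        rwa [hins i (by omega) x t n h2] at h4
  · rw [hBpre, ← Measure.map_apply hTmeas hB'meas, ← Measure.map_apply hTmeas hB'meas,
      hpi₁, hpi₂]
    refine pi_meas_eq hB'meas fun i => ?_
    by_cases hi : (i : ℕ) + 1 < lam
    · left
      rw [hm₁ i, hm₂ i, if_pos hi, if_pos hi]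
    · right
      refine ⟨by rw [hm₁ i, hm₂ i, if_neg hi, if_neg hi]; exact hdom, ?_⟩
      intro x t t' hx n h1 h2
      rw [hins i (by omega) x t' n h2]
      have h4 := hx n h1 h2
      rwa [hins i (by omega) x t n h2] at h4

end Core

section Final

lemma measurableSet_le_tau {𝒳 : Type*} [MeasurableSpace 𝒳] {L : 𝒳 → ℝ} (hL : Measurable L)
    (r η : ℝ) (lam : ℕ) :
    MeasurableSet {ω : ℕ → 𝒳 | (lam : ℕ∞) ≤ tauSR r L η ω} := by
  have h : {ω : ℕ → 𝒳 | (lam : ℕ∞) ≤ tauSR r L η ω}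
      = ⋂ n, ⋂ (_ : 1 ≤ n), ⋂ (_ : n < lam), {ω | srProc r L ω n < η} := by
    ext ω
    rw [Set.mem_setOf_eq, le_tauSR_iff]
    constructor
    · intro hx
      exact Set.mem_iInter.2 fun n => Set.mem_iInter.2 fun h1 => Set.mem_iInter.2 fun h2 =>
        hx n h1 h2
    · intro hx n h1 h2
      exact Set.mem_iInter.1 (Set.mem_iInter.1 (Set.mem_iInter.1 hx n) h1) h2
  rw [h]
  exact MeasurableSet.iInter fun n => MeasurableSet.iInter fun _ =>
    MeasurableSet.iInter fun _ => measurableSet_lt (measurable_srProc hL r n) measurable_const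

lemma measurableSet_tau_le {𝒳 : Type*} [MeasurableSpace 𝒳] {L : 𝒳 → ℝ} (hL : Measurable L)
    (r η : ℝ) (K : ℕ) :
    MeasurableSet {ω : ℕ → 𝒳 | tauSR r L η ω ≤ (K : ℕ∞)} := by
  have h : {ω : ℕ → 𝒳 | tauSR r L η ω ≤ (K : ℕ∞)}
      = ⋃ n, ⋃ (_ : 1 ≤ n), ⋃ (_ : n ≤ K), {ω | η ≤ srProc r L ω n} := by
    ext ω
    rw [Set.mem_setOf_eq, tauSR_le_iff]
    constructor
    · rintro ⟨n, h1, h2, h3⟩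
      exact Set.mem_iUnion.2 ⟨n, Set.mem_iUnion.2 ⟨h1, Set.mem_iUnion.2 ⟨h2, h3⟩⟩⟩
    · intro hx
      obtain ⟨n, hx⟩ := Set.mem_iUnion.1 hx
      obtain ⟨h1, hx⟩ := Set.mem_iUnion.1 hx
      obtain ⟨h2, h3⟩ := Set.mem_iUnion.1 hx
      exact ⟨n, h1, h2, h3⟩
  rw [h]
  exact MeasurableSet.iUnion fun n => MeasurableSet.iUnion fun _ =>
    MeasurableSet.iUnion fun _ => measurableSet_le measurable_const (measurable_srProc hL r n)

lemma enat_toENNReal_eq_tsum (m : ℕ∞) :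
    (m : ℝ≥0∞) = ∑' k : ℕ, if (k : ℕ∞) < m then 1 else 0 := by
  induction m using ENat.recTopCoe with
  | top =>
    have h : ∀ k : ℕ, (if (k : ℕ∞) < ⊤ then (1 : ℝ≥0∞) else 0) = 1 := by
      intro k
      rw [if_pos (lt_top_iff_ne_top.2 (WithTop.coe_ne_top))]
    simp only [h]
    rw [ENat.toENNReal_top, ENNReal.tsum_const_eq_top_of_ne_zero one_ne_zero]
  | coe n =>
    rw [ENat.toENNReal_coe]
    have h2 : ∀ k ∉ Finset.range n, (if (k : ℕ∞) < (n : ℕ∞) then (1 : ℝ≥0∞) else 0) = 0 := by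
      intro k hk
      simp only [Finset.mem_range, not_lt] at hk
      rw [if_neg (not_lt.2 (by exact_mod_cast hk))]
    rw [tsum_eq_sum h2]
    have h3 : ∀ k ∈ Finset.range n, (if (k : ℕ∞) < (n : ℕ∞) then (1 : ℝ≥0∞) else 0) = 1 := by
      intro k hk
      rw [if_pos (by exact_mod_cast Finset.mem_range.mp hk)]
    rw [Finset.sum_congr rfl h3, Finset.sum_const, Finset.card_range, nsmul_eq_mul, mul_one]

lemma lintegral_tau_sub_eq_tsum {𝒳 : Type*} [MeasurableSpace 𝒳] {L : 𝒳 → ℝ} (hL : Measurable L)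
    (r η : ℝ) (lam : ℕ) (P : Measure (ℕ → 𝒳)) :
    ∫⁻ ω in {ω | (lam : ℕ∞) ≤ tauSR r L η ω},
        ((tauSR r L η ω - (lam : ℕ∞) : ℕ∞) : ℝ≥0∞) ∂P
      = ∑' k : ℕ, P ({ω | tauSR r L η ω ≤ ((lam + k : ℕ) : ℕ∞)}ᶜ
          ∩ {ω | (lam : ℕ∞) ≤ tauSR r L η ω}) := by
  have hEk : ∀ k : ℕ, {ω : ℕ → 𝒳 | (k : ℕ∞) < tauSR r L η ω - (lam : ℕ∞)}
      = {ω | tauSR r L η ω ≤ ((lam + k : ℕ) : ℕ∞)}ᶜ := by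
    intro k
    ext ω
    simp only [Set.mem_setOf_eq, Set.mem_compl_iff]
    have hcast : ((lam + k : ℕ) : ℕ∞) = (k : ℕ∞) + (lam : ℕ∞) := by
      push_cast
      ring
    constructor
    · intro h hc
      rw [hcast] at hc
      exact absurd (tsub_le_iff_right.2 hc) (not_le.2 h)
    · intro h
      by_contra hc
      push_neg at hc
      apply h
      rw [hcast]
      exact tsub_le_iff_right.1 hc
  have hmeasEk : ∀ k : ℕ,
      MeasurableSet {ω : ℕ → 𝒳 | (k : ℕ∞) < tauSR r L η ω - (lam : ℕ∞)} := by
    intro k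
    rw [hEk k]
    exact (measurableSet_tau_le hL r η _).compl
  calc ∫⁻ ω in {ω | (lam : ℕ∞) ≤ tauSR r L η ω},
        ((tauSR r L η ω - (lam : ℕ∞) : ℕ∞) : ℝ≥0∞) ∂P
      = ∫⁻ ω in {ω | (lam : ℕ∞) ≤ tauSR r L η ω},
          ∑' k : ℕ, Set.indicator {ω : ℕ → 𝒳 | (k : ℕ∞) < tauSR r L η ω - (lam : ℕ∞)}
            (1 : (ℕ → 𝒳) → ℝ≥0∞) ω ∂P := by
        refine lintegral_congr fun ω => ?_
        rw [enat_toENNReal_eq_tsum]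
        refine tsum_congr fun k => ?_
        by_cases h : (k : ℕ∞) < tauSR r L η ω - (lam : ℕ∞)
        · simp [Set.indicator_apply, h]
        · simp [Set.indicator_apply, h]
    _ = ∑' k : ℕ, ∫⁻ ω in {ω | (lam : ℕ∞) ≤ tauSR r L η ω},
          Set.indicator {ω : ℕ → 𝒳 | (k : ℕ∞) < tauSR r L η ω - (lam : ℕ∞)}
            (1 : (ℕ → 𝒳) → ℝ≥0∞) ω ∂P :=
        lintegral_tsum fun k => (measurable_one.indicator (hmeasEk k)).aemeasurable
    _ = ∑' k : ℕ, P ({ω | tauSR r L η ω ≤ ((lam + k : ℕ) : ℕ∞)}ᶜ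
          ∩ {ω | (lam : ℕ∞) ≤ tauSR r L η ω}) := by
        refine tsum_congr fun k => ?_
        rw [lintegral_indicator_one (hmeasEk k),
          Measure.restrict_apply (hmeasEk k), hEk k]

end Final

/-- **core estimate in the proof of Theorem 2, for the SR-`r` procedure.**
Let `ν̲1 ≪ ν0` with `L* = log (dν̲1/dν0)` continuous on the support of `ν0`, and let `ν1` be
a probability measure whose `L*`-pushforward stochastically dominates that of `ν̲1`.  Fix
`r ≥ 0` and let `τ_r` be the SR-`r` stopping rule with threshold `η`.  Then for every change
point `λ ≥ 1` and every `N ≥ 1`, provided `P_λ^{ν0,ν̲1}(τ_r ≥ λ) > 0`,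
`P_λ^{ν0,ν̲1}(τ_r − λ ≤ N | τ_r ≥ λ) ≤ P_λ^{ν0,ν1}(τ_r − λ ≤ N | τ_r ≥ λ)`, and consequently
`E_λ^{ν0,ν̲1}[τ_r − λ | τ_r ≥ λ] ≥ E_λ^{ν0,ν1}[τ_r − λ | τ_r ≥ λ]`. -/
theorem stmt_14 {𝒳 : Type*} [MeasurableSpace 𝒳] [TopologicalSpace 𝒳]
    (ν0 ν1u ν1 : Measure 𝒳)
    [IsProbabilityMeasure ν0] [IsProbabilityMeasure ν1u] [IsProbabilityMeasure ν1]
    (habs : ν1u ≪ ν0)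
    (hLcont : ContinuousOn (llr ν1u ν0) (measSupport ν0))
    (hdom : StochLarger (ν1.map (llr ν1u ν0)) (ν1u.map (llr ν1u ν0)))
    (r : ℝ) (hr : 0 ≤ r) (η : ℝ) (lam : ℕ) (hlam : 1 ≤ lam)
    -- `P₁ = P_λ^{ν0, ν̲1}` and `P₂ = P_λ^{ν0, ν1}` are the change-point product laws
    (P₁ P₂ : Measure (ℕ → 𝒳))
    [IsProbabilityMeasure P₁] [IsProbabilityMeasure P₂]
    (hP₁indep : iIndepFun (fun (n : ℕ) (ω : ℕ → 𝒳) => ω n) P₁)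
    (hP₂indep : iIndepFun (fun (n : ℕ) (ω : ℕ → 𝒳) => ω n) P₂)
    (hP₁marg : ∀ n : ℕ, 1 ≤ n →
      P₁.map (fun ω => ω n) = if n < lam then ν0 else ν1u)
    (hP₂marg : ∀ n : ℕ, 1 ≤ n →
      P₂.map (fun ω => ω n) = if n < lam then ν0 else ν1)
    (hpos : 0 < P₁ {ω | (lam : ℕ∞) ≤ tauSR r (llr ν1u ν0) η ω}) :
    (∀ N : ℕ, 1 ≤ N →
      P₁ ({ω | tauSR r (llr ν1u ν0) η ω - (lam : ℕ∞) ≤ (N : ℕ∞)}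
            ∩ {ω | (lam : ℕ∞) ≤ tauSR r (llr ν1u ν0) η ω})
          / P₁ {ω | (lam : ℕ∞) ≤ tauSR r (llr ν1u ν0) η ω}
        ≤ P₂ ({ω | tauSR r (llr ν1u ν0) η ω - (lam : ℕ∞) ≤ (N : ℕ∞)}
            ∩ {ω | (lam : ℕ∞) ≤ tauSR r (llr ν1u ν0) η ω})
          / P₂ {ω | (lam : ℕ∞) ≤ tauSR r (llr ν1u ν0) η ω}) ∧
    (∫⁻ ω in {ω | (lam : ℕ∞) ≤ tauSR r (llr ν1u ν0) η ω},
          ((tauSR r (llr ν1u ν0) η ω - (lam : ℕ∞) : ℕ∞) : ℝ≥0∞) ∂P₂)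
        / P₂ {ω | (lam : ℕ∞) ≤ tauSR r (llr ν1u ν0) η ω}
      ≤ (∫⁻ ω in {ω | (lam : ℕ∞) ≤ tauSR r (llr ν1u ν0) η ω},
          ((tauSR r (llr ν1u ν0) η ω - (lam : ℕ∞) : ℕ∞) : ℝ≥0∞) ∂P₁)
        / P₁ {ω | (lam : ℕ∞) ≤ tauSR r (llr ν1u ν0) η ω} := by
  have hL : Measurable (llr ν1u ν0) := measurable_llr _ _
  have hcore : ∀ N : ℕ,
      P₁ ({ω | tauSR r (llr ν1u ν0) η ω ≤ ((lam + N : ℕ) : ℕ∞)}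
          ∩ {ω | (lam : ℕ∞) ≤ tauSR r (llr ν1u ν0) η ω})
        ≤ P₂ ({ω | tauSR r (llr ν1u ν0) η ω ≤ ((lam + N : ℕ) : ℕ∞)}
          ∩ {ω | (lam : ℕ∞) ≤ tauSR r (llr ν1u ν0) η ω})
      ∧ P₁ {ω | (lam : ℕ∞) ≤ tauSR r (llr ν1u ν0) η ω}
        = P₂ {ω | (lam : ℕ∞) ≤ tauSR r (llr ν1u ν0) η ω} :=
    fun N => core_ineq hL hdom hr η hlam hP₁indep hP₂indep hP₁marg hP₂marg N
  have hdenom := (hcore 0).2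
  have hBmeas : MeasurableSet {ω : ℕ → 𝒳 | (lam : ℕ∞) ≤ tauSR r (llr ν1u ν0) η ω} :=
    measurableSet_le_tau hL r η lam
  constructor
  · intro N _
    have hev : {ω : ℕ → 𝒳 | tauSR r (llr ν1u ν0) η ω - (lam : ℕ∞) ≤ (N : ℕ∞)}
        = {ω | tauSR r (llr ν1u ν0) η ω ≤ ((lam + N : ℕ) : ℕ∞)} := by
      ext ω
      simp only [Set.mem_setOf_eq]
      rw [tsub_le_iff_right,
        show ((lam + N : ℕ) : ℕ∞) = (N : ℕ∞) + (lam : ℕ∞) by push_cast; ring]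
    rw [hev, hdenom]
    exact ENNReal.div_le_div_right (hcore N).1 _
  · rw [lintegral_tau_sub_eq_tsum hL r η lam P₁, lintegral_tau_sub_eq_tsum hL r η lam P₂,
      ← hdenom]
    refine ENNReal.div_le_div_right (ENNReal.tsum_le_tsum fun k => ?_) _
    have hDkmeas : MeasurableSet ({ω : ℕ → 𝒳 | tauSR r (llr ν1u ν0) η ω ≤ ((lam + k : ℕ) : ℕ∞)}
        ∩ {ω | (lam : ℕ∞) ≤ tauSR r (llr ν1u ν0) η ω}) :=
      (measurableSet_tau_le hL r η _).inter hBmeas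
    have hsplit : ∀ P : Measure (ℕ → 𝒳), IsProbabilityMeasure P →
        P ({ω : ℕ → 𝒳 | tauSR r (llr ν1u ν0) η ω ≤ ((lam + k : ℕ) : ℕ∞)}ᶜ
            ∩ {ω | (lam : ℕ∞) ≤ tauSR r (llr ν1u ν0) η ω})
          = P {ω | (lam : ℕ∞) ≤ tauSR r (llr ν1u ν0) η ω}
            - P ({ω : ℕ → 𝒳 | tauSR r (llr ν1u ν0) η ω ≤ ((lam + k : ℕ) : ℕ∞)}
              ∩ {ω | (lam : ℕ∞) ≤ tauSR r (llr ν1u ν0) η ω}) := by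
      intro P _
      have hset : {ω : ℕ → 𝒳 | tauSR r (llr ν1u ν0) η ω ≤ ((lam + k : ℕ) : ℕ∞)}ᶜ
            ∩ {ω | (lam : ℕ∞) ≤ tauSR r (llr ν1u ν0) η ω}
          = {ω : ℕ → 𝒳 | (lam : ℕ∞) ≤ tauSR r (llr ν1u ν0) η ω}
            \ ({ω : ℕ → 𝒳 | tauSR r (llr ν1u ν0) η ω ≤ ((lam + k : ℕ) : ℕ∞)}
              ∩ {ω | (lam : ℕ∞) ≤ tauSR r (llr ν1u ν0) η ω}) := by
        ext ω
        simp only [Set.mem_inter_iff, Set.mem_compl_iff, Set.mem_diff, Set.mem_setOf_eq]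
        tauto
      rw [hset, measure_diff Set.inter_subset_right hDkmeas.nullMeasurableSet
        (measure_ne_top _ _)]
    rw [hsplit P₁ inferInstance, hsplit P₂ inferInstance, ← hdenom]
    exact tsub_le_tsub_left (hcore k).1 _
end
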